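/- arXiv:1708.05634 — 6 statements merged into one kernel-verified Lean document; each statement's English description precedes it below -/
import Mathlib

section
/- For every nonnegative integer n and every real u with |u| < 1, the polylogarithm of negative order -n satisfies Li_{-n}(u) = ∑_{k=0}^{n} k! · S(n+1, k+1) · (u/(1-u))^{k+1}, where S(n, k) denotes the Stirling number of the second kind; that is, ∑_{l=1}^{∞} l^n u^l = ∑_{k=0}^{n} k! · S(n+1, k+1) · (u/(1-u))^{k+1}. -/
/-- Stirling numbers of the second kind: `stirling2 n k` counts the partitions of an
`n`-element set into `k` nonempty blocks. -/
def stirling2 : ℕ → ℕ → ℕ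
  | 0, 0 => 0 + 1
  | 0, _ + 1 => 0
  | _ + 1, 0 => 0
  | n + 1, k + 1 => (k + 1) * stirling2 n (k + 1) + stirling2 n k

lemma stirling2_zero_right (n : ℕ) : stirling2 (n + 1) 0 = 0 := rfl

lemma stirling2_succ (n k : ℕ) :
    stirling2 (n + 1) (k + 1) = (k + 1) * stirling2 n (k + 1) + stirling2 n k := rfl

lemma stirling2_eq_zero : ∀ {n k : ℕ}, n < k → stirling2 n k = 0
  | 0, _ + 1, _ => rfl
  | n + 1, k + 1, h => by
      rw [stirling2_succ, stirling2_eq_zero (by omega), stirling2_eq_zero (by omega)]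
      ring

lemma choose_key (m k : ℕ) :
    (m : ℝ) * (m.choose k : ℝ) = (k + 1) * (m.choose (k + 1) : ℝ) + k * (m.choose k : ℝ) := by
  rcases le_or_gt k m with h | h
  · have := congrArg (Nat.cast : ℕ → ℝ) (Nat.choose_succ_right_eq m k)
    push_cast [Nat.cast_sub h] at this
    nlinarith [this]
  · rw [Nat.choose_eq_zero_of_lt h, Nat.choose_eq_zero_of_lt (by omega)]
    push_cast; ring

lemma pow_eq_sum_stirling (n m : ℕ) :
    ((m : ℝ)) ^ n = ∑ k ∈ Finset.range (n + 1),
      (Nat.factorial k : ℝ) * (stirling2 n k : ℝ) * (m.choose k : ℝ) := by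
  induction n with
  | zero => simp [stirling2]
  | succ n ih =>
      have L : ∑ k ∈ Finset.range (n + 1),
            (Nat.factorial k : ℝ) * (stirling2 n k : ℝ) * ((m : ℝ) * (m.choose k : ℝ))
          = (∑ k ∈ Finset.range (n + 1),
              (Nat.factorial k : ℝ) * (stirling2 n k : ℝ) * ((k + 1) * (m.choose (k + 1) : ℝ)))
            + ∑ k ∈ Finset.range (n + 1),
              (Nat.factorial k : ℝ) * (stirling2 n k : ℝ) * (k * (m.choose k : ℝ)) := by
        rw [← Finset.sum_add_distrib]
        refine Finset.sum_congr rfl fun k _ => ?_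
        rw [choose_key m k]; ring
      have R : ∑ k ∈ Finset.range (n + 2),
            (Nat.factorial k : ℝ) * (stirling2 (n + 1) k : ℝ) * (m.choose k : ℝ)
          = (∑ k ∈ Finset.range (n + 1), (Nat.factorial (k+1) : ℝ) *
                (stirling2 n k : ℝ) * (m.choose (k + 1) : ℝ))
            + ∑ k ∈ Finset.range (n + 1), (Nat.factorial (k+1) : ℝ) * ((k:ℝ)+1) *
                (stirling2 n (k+1) : ℝ) * (m.choose (k + 1) : ℝ) := by
        rw [Finset.sum_range_succ' _ (n + 1)]
        simp only [stirling2_zero_right, Nat.cast_zero, mul_zero, zero_mul, add_zero]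
        rw [← Finset.sum_add_distrib]
        refine Finset.sum_congr rfl fun k _ => ?_
        rw [stirling2_succ]
        push_cast
        ring
      have hA : ∑ k ∈ Finset.range (n + 1),
            (Nat.factorial k : ℝ) * (stirling2 n k : ℝ) * ((k + 1) * (m.choose (k + 1) : ℝ))
          = ∑ k ∈ Finset.range (n + 1), (Nat.factorial (k+1) : ℝ) *
                (stirling2 n k : ℝ) * (m.choose (k + 1) : ℝ) := by
        refine Finset.sum_congr rfl fun k _ => ?_
        rw [Nat.factorial_succ]; push_cast; ring
      have hB : ∑ k ∈ Finset.range (n + 1),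
            (Nat.factorial k : ℝ) * (stirling2 n k : ℝ) * (k * (m.choose k : ℝ))
          = ∑ k ∈ Finset.range (n + 1), (Nat.factorial (k+1) : ℝ) * ((k:ℝ)+1) *
                (stirling2 n (k+1) : ℝ) * (m.choose (k + 1) : ℝ) := by
        rw [Finset.sum_range_succ' (fun k => (Nat.factorial k : ℝ) * (stirling2 n k : ℝ) *
              (k * (m.choose k : ℝ))) n]
        rw [Finset.sum_range_succ]
        rw [stirling2_eq_zero (Nat.lt_succ_self n)]
        simp only [Nat.cast_zero, mul_zero, zero_mul, add_zero]
        refine Finset.sum_congr rfl fun k _ => ?_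
        rw [Nat.factorial_succ]; push_cast; ring
      have key : ((m:ℝ)) ^ (n+1) = ∑ k ∈ Finset.range (n + 1),
          (Nat.factorial k : ℝ) * (stirling2 n k : ℝ) * ((m : ℝ) * (m.choose k : ℝ)) := by
        rw [show ((m:ℝ))^(n+1) = ((m:ℝ))^n * m by ring, ih, Finset.sum_mul]
        exact Finset.sum_congr rfl fun k _ => by ring
      rw [key, L, R, hA, hB]

lemma hasSum_choose_geom {u : ℝ} (hu : |u| < 1) (k : ℕ) :
    HasSum (fun m : ℕ => (m.choose k : ℝ) * u ^ m) (u ^ k / (1 - u) ^ (k + 1)) := by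
  have hnorm : ‖u‖ < 1 := by rwa [Real.norm_eq_abs]
  have h1 : HasSum (fun n : ℕ => ((n + k).choose k : ℝ) * u ^ n) (1 / (1 - u) ^ (k + 1)) :=
    hasSum_choose_mul_geometric_of_norm_lt_one k hnorm
  have h2 := h1.mul_left (u ^ k)
  rw [mul_one_div] at h2
  have hfun : (fun n : ℕ => (u : ℝ) ^ k * (((n + k).choose k : ℝ) * u ^ n))
      = fun n : ℕ => ((n + k).choose k : ℝ) * u ^ (n + k) := by
    funext n; rw [pow_add]; ring
  rw [hfun] at h2
  have hzero : ∑ i ∈ Finset.range k, (i.choose k : ℝ) * u ^ i = 0 :=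
    Finset.sum_eq_zero fun i hi => by
      rw [Nat.choose_eq_zero_of_lt (Finset.mem_range.mp hi)]; simp
  refine (hasSum_nat_add_iff' (f := fun m : ℕ => (m.choose k : ℝ) * u ^ m) k).mp ?_
  rw [hzero, sub_zero]
  exact h2

lemma hasSum_choose_geom_shift {u : ℝ} (hu : |u| < 1) (k : ℕ) :
    HasSum (fun l : ℕ => (((l + 1).choose k : ℝ)) * u ^ (l + 1))
      (u ^ k / (1 - u) ^ (k + 1) - (if k = 0 then 1 else 0)) := by
  have h := hasSum_choose_geom hu k
  have h2 := (hasSum_nat_add_iff' (f := fun m : ℕ => (m.choose k : ℝ) * u ^ m) 1).mpr h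
  rw [Finset.sum_range_one] at h2
  cases k with
  | zero => simpa using h2
  | succ k => simpa using h2

lemma key_alg (n : ℕ) (x : ℝ) :
    ∑ k ∈ Finset.range (n + 1),
        (Nat.factorial k : ℝ) * (stirling2 n k : ℝ) * (x ^ k * (1 + x)) - (stirling2 n 0 : ℝ)
      = ∑ k ∈ Finset.range (n + 1),
        (Nat.factorial k : ℝ) * (stirling2 (n + 1) (k + 1) : ℝ) * x ^ (k + 1) := by
  have hR : ∑ k ∈ Finset.range (n + 1),
        (Nat.factorial k : ℝ) * (stirling2 (n + 1) (k + 1) : ℝ) * x ^ (k + 1)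
      = (∑ k ∈ Finset.range (n + 1),
          (Nat.factorial (k + 1) : ℝ) * (stirling2 n (k + 1) : ℝ) * x ^ (k + 1))
        + ∑ k ∈ Finset.range (n + 1),
          (Nat.factorial k : ℝ) * (stirling2 n k : ℝ) * x ^ (k + 1) := by
    rw [← Finset.sum_add_distrib]
    refine Finset.sum_congr rfl fun k _ => ?_
    rw [stirling2_succ, Nat.factorial_succ]
    push_cast
    ring
  have h1 : ∑ k ∈ Finset.range (n + 2),
        (Nat.factorial k : ℝ) * (stirling2 n k : ℝ) * x ^ k
      = (∑ k ∈ Finset.range (n + 1),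
          (Nat.factorial (k + 1) : ℝ) * (stirling2 n (k + 1) : ℝ) * x ^ (k + 1))
        + (stirling2 n 0 : ℝ) := by
    rw [Finset.sum_range_succ' (fun k => (Nat.factorial k : ℝ) * (stirling2 n k : ℝ) * x ^ k)
      (n + 1)]
    simp [Nat.factorial_zero]
  have h2 : ∑ k ∈ Finset.range (n + 2),
        (Nat.factorial k : ℝ) * (stirling2 n k : ℝ) * x ^ k
      = ∑ k ∈ Finset.range (n + 1),
          (Nat.factorial k : ℝ) * (stirling2 n k : ℝ) * x ^ k := by
    rw [Finset.sum_range_succ, stirling2_eq_zero (Nat.lt_succ_self n)]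
    simp
  have h3 : ∑ k ∈ Finset.range (n + 1),
        (Nat.factorial k : ℝ) * (stirling2 n k : ℝ) * (x ^ k * (1 + x))
      = (∑ k ∈ Finset.range (n + 1),
          (Nat.factorial k : ℝ) * (stirling2 n k : ℝ) * x ^ k)
        + ∑ k ∈ Finset.range (n + 1),
          (Nat.factorial k : ℝ) * (stirling2 n k : ℝ) * x ^ (k + 1) := by
    rw [← Finset.sum_add_distrib]
    refine Finset.sum_congr rfl fun k _ => ?_
    ring
  linarith

/-- For every nonnegative integer `n` and real `u` with `|u| < 1`, the polylogarithm of
negative order `-n`, `Li_{-n}(u) = ∑_{l ≥ 1} l^n u^l`, equals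
`∑_{k=0}^{n} k! ⬝ S(n+1, k+1) ⬝ (u/(1-u))^(k+1)`. -/
theorem polylog_neg_order_eq (n : ℕ) (u : ℝ) (hu : |u| < 1) :
    ∑' l : ℕ, ((l : ℝ) + 1) ^ n * u ^ (l + 1)
      = ∑ k ∈ Finset.range (n + 1),
          (Nat.factorial k : ℝ) * (stirling2 (n + 1) (k + 1) : ℝ) * (u / (1 - u)) ^ (k + 1) := by
  have hu1 : (1 : ℝ) - u ≠ 0 := by
    have := (abs_lt.mp hu).2
    intro h; linarith
  have H : HasSum
      (fun l : ℕ => ∑ k ∈ Finset.range (n + 1),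
        (Nat.factorial k : ℝ) * (stirling2 n k : ℝ) * (((l + 1).choose k : ℝ) * u ^ (l + 1)))
      (∑ k ∈ Finset.range (n + 1),
        (Nat.factorial k : ℝ) * (stirling2 n k : ℝ) *
          (u ^ k / (1 - u) ^ (k + 1) - (if k = 0 then 1 else 0))) :=
    hasSum_sum fun k _ => (hasSum_choose_geom_shift hu k).mul_left _
  have hf : (fun l : ℕ => ((l : ℝ) + 1) ^ n * u ^ (l + 1))
      = fun l : ℕ => ∑ k ∈ Finset.range (n + 1),
        (Nat.factorial k : ℝ) * (stirling2 n k : ℝ) * (((l + 1).choose k : ℝ) * u ^ (l + 1)) := by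
    funext l
    have h := pow_eq_sum_stirling n (l + 1)
    push_cast at h
    rw [h, Finset.sum_mul]
    exact Finset.sum_congr rfl fun k _ => by ring
  rw [hf, H.tsum_eq]
  have hx : ∀ k : ℕ, u ^ k / (1 - u) ^ (k + 1)
      = (u / (1 - u)) ^ k * (1 + u / (1 - u)) := by
    intro k
    have h1 : 1 + u / (1 - u) = 1 / (1 - u) := by field_simp; ring
    rw [h1, div_pow, div_mul_div_comm, mul_one, ← pow_succ]
  have hsplit : ∑ k ∈ Finset.range (n + 1),
        (Nat.factorial k : ℝ) * (stirling2 n k : ℝ) *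
          (u ^ k / (1 - u) ^ (k + 1) - (if k = 0 then 1 else 0))
      = (∑ k ∈ Finset.range (n + 1),
          (Nat.factorial k : ℝ) * (stirling2 n k : ℝ) *
            ((u / (1 - u)) ^ k * (1 + u / (1 - u))))
        - ∑ k ∈ Finset.range (n + 1),
          (Nat.factorial k : ℝ) * (stirling2 n k : ℝ) * (if k = 0 then 1 else 0) := by
    rw [← Finset.sum_sub_distrib]
    refine Finset.sum_congr rfl fun k _ => ?_
    rw [hx k]
    ring
  have hdelta : ∑ k ∈ Finset.range (n + 1),
      (Nat.factorial k : ℝ) * (stirling2 n k : ℝ) * (if k = 0 then 1 else 0)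
      = (stirling2 n 0 : ℝ) := by
    rw [Finset.sum_eq_single 0]
    · simp
    · intro k _ hk
      simp [hk]
    · intro h
      exact absurd (Finset.mem_range.mpr (Nat.succ_pos n)) h
  rw [hsplit, hdelta]
  exact key_alg n (u / (1 - u))
end

section
/- Let θ > 0, let n ≥ 2, and let G_1, …, G_{n-1} be independent random variables where G_k is geometric on ℕ₀ with success probability k/(k+θ), i.e. P(G_k = m) = (k/(k+θ)) · (θ/(k+θ))^m for m ∈ ℕ₀. Set S_n = ∑_{k=1}^{n-1} G_k (the number of segregating sites in a sample of size n). Then for every positive integer i, the i-th cumulant of S_n equals ∑_{k=1}^{n-1} Li_{1-i}(θ/(k+θ)) = ∑_{b=1}^{i} S(i, b) · (b-1)! · θ^b · H_{n-1}^{(b)}, where S(i, b) is the Stirling number of the second kind and H_{n-1}^{(b)} = ∑_{k=1}^{n-1} 1/k^b is the generalized harmonic number. -/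
open MeasureTheory ProbabilityTheory

section Aux
open Finset Real Filter Set
open scoped ENNReal

lemma stirling2_eq_zero_of_lt : ∀ {i b : ℕ}, i < b → stirling2 i b = 0
  | 0, 0, h => by omega
  | 0, b + 1, _ => rfl
  | i + 1, b + 1, h => by
      rw [stirling2, stirling2_eq_zero_of_lt (by omega : i < b + 1),
        stirling2_eq_zero_of_lt (by omega : i < b)]
      simp

lemma mul_descFactorial (m b : ℕ) :
    m * m.descFactorial b = m.descFactorial (b + 1) + b * m.descFactorial b := by
  rcases le_or_gt b m with h | h
  · rw [Nat.descFactorial_succ, ← Nat.add_mul]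
    congr 1
    omega
  · rw [Nat.descFactorial_eq_zero_iff_lt.2 h, Nat.descFactorial_eq_zero_iff_lt.2 (by omega)]
    simp

lemma pow_eq_sum_stirling2 (i m : ℕ) :
    m ^ i = ∑ b ∈ range (i + 1), stirling2 i b * m.descFactorial b := by
  induction i with
  | zero => simp [stirling2]
  | succ i ih =>
    have h1 : ∑ b ∈ range (i + 2), stirling2 (i + 1) b * m.descFactorial b
        = ∑ b ∈ range (i + 1), stirling2 (i + 1) (b + 1) * m.descFactorial (b + 1) := by
      rw [Finset.sum_range_succ' _ (i + 1)]
      simp [stirling2]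
    rw [h1, pow_succ, mul_comm, ih, Finset.mul_sum]
    have h2 : ∀ b ∈ range (i + 1), m * (stirling2 i b * m.descFactorial b)
        = stirling2 i b * m.descFactorial (b + 1) + b * (stirling2 i b * m.descFactorial b) := by
      intro b _
      rw [mul_left_comm, mul_descFactorial, Nat.mul_add, mul_left_comm]
    rw [Finset.sum_congr rfl h2, Finset.sum_add_distrib]
    have h3 : ∑ b ∈ range (i + 1), b * (stirling2 i b * m.descFactorial b)
        = ∑ b ∈ range (i + 1), (b + 1) * stirling2 i (b + 1) * m.descFactorial (b + 1) := by
      rw [Finset.sum_range_succ' (fun b => b * (stirling2 i b * m.descFactorial b)) i,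
        Finset.sum_range_succ (fun b => (b + 1) * stirling2 i (b + 1) * m.descFactorial (b + 1)) i,
        stirling2_eq_zero_of_lt (Nat.lt_succ_self i)]
      simp only [Nat.zero_mul, Nat.mul_zero, Nat.add_zero, Nat.mul_assoc]
    rw [h3, ← Finset.sum_add_distrib]
    apply Finset.sum_congr rfl
    intro b _
    rw [stirling2]
    ring

lemma pow_pred_eq_sum_stirling2 {i : ℕ} (hi : 1 ≤ i) (l : ℕ) :
    (l + 1) ^ (i - 1) = ∑ b ∈ range i, stirling2 i (b + 1) * l.descFactorial b := by
  obtain ⟨j, rfl⟩ : ∃ j, i = j + 1 := ⟨i - 1, by omega⟩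
  have key := pow_eq_sum_stirling2 (j + 1) (l + 1)
  have h1 : ∑ b ∈ range (j + 2), stirling2 (j + 1) b * (l + 1).descFactorial b
      = (l + 1) * ∑ b ∈ range (j + 1), stirling2 (j + 1) (b + 1) * l.descFactorial b := by
    rw [Finset.sum_range_succ' _ (j + 1), Finset.mul_sum]
    have h0 : stirling2 (j + 1) 0 = 0 := rfl
    rw [h0]
    simp only [Nat.zero_mul, Nat.add_zero, Nat.succ_descFactorial_succ]
    apply Finset.sum_congr rfl
    intro b _
    ring
  rw [h1, pow_succ'] at key
  have := Nat.eq_of_mul_eq_mul_left (Nat.succ_pos l) key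
  simpa using this
lemma hasSum_descFactorial_geom (b : ℕ) {q : ℝ} (h0 : 0 ≤ q) (h1 : q < 1) :
    HasSum (fun l : ℕ => (l.descFactorial b : ℝ) * q ^ (l + 1))
      ((Nat.factorial b : ℝ) * (q / (1 - q)) ^ (b + 1)) := by
  have hq : ‖q‖ < 1 := by rwa [Real.norm_eq_abs, abs_of_nonneg h0]
  have h := (hasSum_choose_mul_geometric_of_norm_lt_one b hq).mul_left
    ((Nat.factorial b : ℝ) * q ^ (b + 1))
  have heq : (fun m : ℕ => (Nat.factorial b : ℝ) * q ^ (b + 1)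
      * (((m + b).choose b : ℝ) * q ^ m))
      = fun m : ℕ => (((m + b).descFactorial b : ℝ) * q ^ (m + b + 1)) := by
    funext m
    rw [Nat.descFactorial_eq_factorial_mul_choose]
    push_cast
    ring
  rw [heq] at h
  have h2 := (hasSum_nat_add_iff (f := fun l : ℕ => (l.descFactorial b : ℝ) * q ^ (l + 1)) b).mp h
  have h3 : ∑ i ∈ range b, ((i.descFactorial b : ℝ) * q ^ (i + 1)) = 0 := by
    apply Finset.sum_eq_zero
    intro i hi
    rw [Nat.descFactorial_eq_zero_iff_lt.2 (Finset.mem_range.mp hi)]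
    simp
  rw [h3, add_zero] at h2
  have hv : (Nat.factorial b : ℝ) * (q / (1 - q)) ^ (b + 1)
      = (Nat.factorial b : ℝ) * q ^ (b + 1) * (1 / (1 - q) ^ (b + 1)) := by
    rw [div_pow]
    ring
  rw [hv]
  exact h2

lemma tsum_geom_moment {i : ℕ} (hi : 1 ≤ i) {q : ℝ} (h0 : 0 ≤ q) (h1 : q < 1) :
    ∑' l : ℕ, ((l : ℝ) + 1) ^ (i - 1) * q ^ (l + 1)
      = ∑ b ∈ range i, (stirling2 i (b + 1) : ℝ) * (Nat.factorial b : ℝ)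
          * (q / (1 - q)) ^ (b + 1) := by
  have hpt : ∀ l : ℕ, ((l : ℝ) + 1) ^ (i - 1) * q ^ (l + 1)
      = ∑ b ∈ range i, (stirling2 i (b + 1) : ℝ) * ((l.descFactorial b : ℝ) * q ^ (l + 1)) := by
    intro l
    have := pow_pred_eq_sum_stirling2 hi l
    have hc : ((l : ℝ) + 1) ^ (i - 1)
        = ∑ b ∈ range i, (stirling2 i (b + 1) : ℝ) * (l.descFactorial b : ℝ) := by
      exact_mod_cast congrArg (Nat.cast : ℕ → ℝ) this
    rw [hc, Finset.sum_mul]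
    exact Finset.sum_congr rfl fun b _ => by ring
  rw [tsum_congr hpt, Summable.tsum_finsetSum (fun b _ =>
    ((hasSum_descFactorial_geom b h0 h1).summable.mul_left _))]
  exact Finset.sum_congr rfl fun b _ => by
    rw [((hasSum_descFactorial_geom b h0 h1).mul_left _).tsum_eq, mul_assoc]

noncomputable def phi (q : ℝ) (j : ℕ) (t : ℝ) : ℝ :=
  ∑' l : ℕ, ((l : ℝ) + 1) ^ j * q ^ (l + 1) * Real.exp (((l : ℝ) + 1) * t)

noncomputable def psi (q : ℝ) (t : ℝ) : ℝ :=
  ∑' l : ℕ, q ^ (l + 1) / ((l : ℝ) + 1) * Real.exp (((l : ℝ) + 1) * t)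

lemma summable_pow_mul_geom {ρ : ℝ} (j : ℕ) (hρ0 : 0 ≤ ρ) (hρ1 : ρ < 1) :
    Summable (fun l : ℕ => ((l : ℝ) + 1) ^ j * ρ ^ (l + 1)) := by
  have h : Summable (fun n : ℕ => (n : ℝ) ^ j * ρ ^ n) :=
    summable_pow_mul_geometric_of_norm_lt_one j
      (by rwa [Real.norm_eq_abs, abs_of_nonneg hρ0])
  have h2 := (summable_nat_add_iff 1).2 h
  apply h2.congr
  intro l
  push_cast
  ring

lemma hasDerivAt_cexp (c a t : ℝ) :
    HasDerivAt (fun t => c * Real.exp (a * t)) (a * c * Real.exp (a * t)) t := by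
  have h := (((hasDerivAt_id t).const_mul a).exp).const_mul c
  simp only [id_eq] at h
  refine h.congr_deriv ?_
  ring

section deriv
variable {ρ ε q : ℝ} (hρ0 : 0 ≤ ρ) (hρ1 : ρ < 1) (hε : 0 < ε) (hq0 : 0 ≤ q)
  (hqt : ∀ t ∈ Ioo (-ε) ε, q * Real.exp t ≤ ρ)

omit hρ0 hρ1 hε in
include hq0 hqt in
lemma qexp_bound {l : ℕ} {t : ℝ} (ht : t ∈ Ioo (-ε) ε) :
    q ^ (l + 1) * Real.exp (((l : ℝ) + 1) * t) ≤ ρ ^ (l + 1) := by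
  have h1 : q ^ (l + 1) * Real.exp (((l : ℝ) + 1) * t) = (q * Real.exp t) ^ (l + 1) := by
    rw [mul_pow, ← Real.exp_nat_mul]
    push_cast
    ring_nf
  rw [h1]
  exact pow_le_pow_left₀ (by positivity) (hqt t ht) _

include hρ0 hρ1 hε hq0 hqt in
lemma hasDerivAt_phi (j : ℕ) {t : ℝ} (ht : t ∈ Ioo (-ε) ε) :
    HasDerivAt (phi q j) (phi q (j + 1) t) t := by
  unfold phi
  refine hasDerivAt_tsum_of_isPreconnected
    (u := fun l : ℕ => ((l : ℝ) + 1) ^ (j + 1) * ρ ^ (l + 1))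
    (g := fun (l : ℕ) t => ((l : ℝ) + 1) ^ j * q ^ (l + 1) * Real.exp (((l : ℝ) + 1) * t))
    (g' := fun (l : ℕ) t => ((l : ℝ) + 1) ^ (j + 1) * q ^ (l + 1) * Real.exp (((l : ℝ) + 1) * t))
    (y₀ := 0)
    (summable_pow_mul_geom (j + 1) hρ0 hρ1) isOpen_Ioo isPreconnected_Ioo
    (fun l y _ => ?_) (fun l y hy => ?_) (mem_Ioo.2 ⟨by linarith, hε⟩) ?_ ht
  · have h := hasDerivAt_cexp (((l : ℝ) + 1) ^ j * q ^ (l + 1)) ((l : ℝ) + 1) y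
    refine h.congr_deriv ?_
    ring
  · rw [Real.norm_eq_abs, abs_of_nonneg (by positivity), mul_assoc]
    exact mul_le_mul_of_nonneg_left (qexp_bound hq0 hqt hy) (by positivity)
  · apply Summable.of_nonneg_of_le (fun l => by positivity)
      (fun l => ?_) (summable_pow_mul_geom j hρ0 hρ1)
    rw [mul_assoc]
    exact mul_le_mul_of_nonneg_left
      (qexp_bound hq0 hqt (mem_Ioo.2 ⟨by linarith, hε⟩)) (by positivity)

include hρ0 hρ1 hε hq0 hqt in
lemma hasDerivAt_psi {t : ℝ} (ht : t ∈ Ioo (-ε) ε) :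
    HasDerivAt (psi q) (phi q 0 t) t := by
  have hval : phi q 0 t = ∑' l : ℕ, q ^ (l + 1) * Real.exp (((l : ℝ) + 1) * t) := by
    unfold phi
    exact tsum_congr fun l => by ring
  unfold psi
  rw [hval]
  refine hasDerivAt_tsum_of_isPreconnected
    (u := fun l : ℕ => ((l : ℝ) + 1) ^ 1 * ρ ^ (l + 1))
    (g := fun (l : ℕ) t => q ^ (l + 1) / ((l : ℝ) + 1) * Real.exp (((l : ℝ) + 1) * t))
    (g' := fun (l : ℕ) t => q ^ (l + 1) * Real.exp (((l : ℝ) + 1) * t))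
    (y₀ := 0)
    (summable_pow_mul_geom 1 hρ0 hρ1) isOpen_Ioo isPreconnected_Ioo
    (fun l y _ => ?_) (fun l y hy => ?_) (mem_Ioo.2 ⟨by linarith, hε⟩) ?_ ht
  · have h := hasDerivAt_cexp (q ^ (l + 1) / ((l : ℝ) + 1)) ((l : ℝ) + 1) y
    refine h.congr_deriv ?_
    have hl : ((l : ℝ) + 1) ≠ 0 := by positivity
    field_simp
  · rw [Real.norm_eq_abs, abs_of_nonneg (by positivity)]
    calc q ^ (l + 1) * Real.exp (((l : ℝ) + 1) * y) ≤ ρ ^ (l + 1) :=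
          qexp_bound hq0 hqt hy
      _ ≤ ((l : ℝ) + 1) ^ 1 * ρ ^ (l + 1) := by
          nlinarith [pow_nonneg hρ0 (l + 1), Nat.cast_nonneg (α := ℝ) l]
  · apply Summable.of_nonneg_of_le (fun l => by positivity) (fun l => ?_)
      (summable_pow_mul_geom 0 hρ0 hρ1)
    have hq1 : q ≤ ρ := by
      have := hqt 0 (mem_Ioo.2 ⟨by linarith, hε⟩)
      simpa using this
    calc q ^ (l + 1) / ((l : ℝ) + 1) * Real.exp (((l : ℝ) + 1) * 0)
        ≤ q ^ (l + 1) := by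
          rw [mul_zero, Real.exp_zero, mul_one]
          apply div_le_self (by positivity)
          simp [le_add_iff_nonneg_left]
      _ ≤ ((l : ℝ) + 1) ^ 0 * ρ ^ (l + 1) := by
          rw [pow_zero, one_mul]
          exact pow_le_pow_left₀ hq0 hq1 _

end deriv
lemma iteratedDeriv_sum_psi {ρ ε : ℝ} (hρ0 : 0 ≤ ρ) (hρ1 : ρ < 1) (hε : 0 < ε)
    {s : Finset ℕ} {q c : ℕ → ℝ}
    (hq0 : ∀ k ∈ s, 0 ≤ q k)
    (hqt : ∀ k ∈ s, ∀ t ∈ Ioo (-ε) ε, q k * Real.exp t ≤ ρ)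
    (j : ℕ) {t : ℝ} (ht : t ∈ Ioo (-ε) ε) :
    iteratedDeriv (j + 1) (fun t => ∑ k ∈ s, (c k + psi (q k) t)) t
      = ∑ k ∈ s, phi (q k) j t := by
  induction j generalizing t with
  | zero =>
    rw [iteratedDeriv_one]
    exact (HasDerivAt.fun_sum fun k hk =>
      ((hasDerivAt_psi hρ0 hρ1 hε (hq0 k hk) (hqt k hk) ht).const_add (c k))).deriv
  | succ j ih =>
    rw [iteratedDeriv_succ]
    have heq : iteratedDeriv (j + 1) (fun t => ∑ k ∈ s, (c k + psi (q k) t))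
        =ᶠ[nhds t] fun y => ∑ k ∈ s, phi (q k) j y :=
      eventuallyEq_of_mem (isOpen_Ioo.mem_nhds ht) (fun y hy => ih hy)
    rw [heq.deriv_eq]
    exact (HasDerivAt.fun_sum fun k hk =>
      (hasDerivAt_phi hρ0 hρ1 hε (hq0 k hk) (hqt k hk) j ht)).deriv

variable {Ω : Type*} [MeasurableSpace Ω] {μ : Measure Ω}

lemma nullMeasurableSet_of_partition [IsProbabilityMeasure μ] {A : ℕ → Set Ω}
    (hd : ∀ m j : ℕ, m ≠ j → Disjoint (A m) (A j))
    (hc : (⋃ m, A m) = Set.univ)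
    (hs : ∑' m, μ (A m) = 1) (m : ℕ) : NullMeasurableSet (A m) μ := by
  set B : ℕ → Set Ω := fun j => toMeasurable μ (A j) with hB
  have hBmeas : ∀ j, MeasurableSet (B j) := fun j => measurableSet_toMeasurable μ (A j)
  have hBsub : ∀ j, A j ⊆ B j := fun j => subset_toMeasurable μ (A j)
  have hBμ : ∀ j, μ (B j) = μ (A j) := fun j => measure_toMeasurable (A j)
  -- key : for j ≠ m, μ (A j ∩ B m) = 0
  have key : ∀ j : ℕ, j ≠ m → μ (A j ∩ B m) = 0 := by
    intro j hj
    -- R := remaining sum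
    set R : ℝ≥0∞ := ∑' l, if l = j then 0 else if l = m then 0 else μ (A l) with hR
    have hsplit : μ (A m) + (μ (A j) + R) = 1 := by
      have h1 := Summable.tsum_eq_add_tsum_ite' (f := fun l => μ (A l)) (b := m) ENNReal.summable
      have h2 := Summable.tsum_eq_add_tsum_ite'
        (f := fun l => if l = m then (0 : ℝ≥0∞) else μ (A l)) (b := j) ENNReal.summable
      simp only [if_neg hj] at h2
      rw [← hs, h1, h2, hR]
    have hRle : R ≤ 1 := by
      rw [← hsplit]
      calc R ≤ μ (A j) + R := le_add_self
        _ ≤ μ (A m) + (μ (A j) + R) := le_add_self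
    have hRne : R ≠ ⊤ := (lt_of_le_of_lt hRle ENNReal.one_lt_top).ne
    -- 1 ≤ μ (A m ∪ A j) + R
    have hcover : (1 : ℝ≥0∞) ≤ μ (A m ∪ A j) + R := by
      have huniv : μ (Set.univ : Set Ω) = 1 := measure_univ
      have hsub : (Set.univ : Set Ω) ⊆ (A m ∪ A j) ∪
          ⋃ l, (if l = j then ∅ else if l = m then ∅ else A l) := by
        rw [← hc]
        intro ω hω
        rw [Set.mem_iUnion] at hω
        obtain ⟨l, hl⟩ := hω
        by_cases h1 : l = m
        · exact Or.inl (Or.inl (h1 ▸ hl))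
        · by_cases h2 : l = j
          · exact Or.inl (Or.inr (h2 ▸ hl))
          · refine Or.inr (Set.mem_iUnion.2 ⟨l, ?_⟩)
            simp [h1, h2, hl]
      calc (1 : ℝ≥0∞) = μ (Set.univ) := huniv.symm
        _ ≤ μ ((A m ∪ A j) ∪ ⋃ l, (if l = j then ∅ else if l = m then ∅ else A l)) :=
            measure_mono hsub
        _ ≤ μ (A m ∪ A j) + μ (⋃ l, (if l = j then ∅ else if l = m then ∅ else A l)) :=
            measure_union_le _ _
        _ ≤ μ (A m ∪ A j) + R := by
            gcongr
            refine le_trans (measure_iUnion_le _) ?_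
            apply ENNReal.tsum_le_tsum
            intro l
            by_cases h1 : l = j <;> by_cases h2 : l = m <;> simp [h1, h2]
    -- so μ (A m) + μ (A j) ≤ μ (A m ∪ A j)
    have hadd : μ (A m) + μ (A j) ≤ μ (A m ∪ A j) := by
      have h1 : μ (A m) + μ (A j) + R ≤ μ (A m ∪ A j) + R := by
        rw [add_assoc, hsplit]
        exact hcover
      exact ENNReal.le_of_add_le_add_right hRne h1
    -- decompose along B m
    have hdec : μ (A m ∪ A j) = μ ((A m ∪ A j) ∩ B m) + μ ((A m ∪ A j) \ B m) :=
      (measure_inter_add_diff _ (hBmeas m)).symm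
    have h2 : μ ((A m ∪ A j) ∩ B m) ≤ μ (A m) := by
      rw [← hBμ m]
      exact measure_mono Set.inter_subset_right
    have h3 : μ ((A m ∪ A j) \ B m) ≤ μ (A j \ B m) := by
      apply measure_mono
      intro ω hω
      rcases hω.1 with h | h
      · exact absurd (hBsub m h) hω.2
      · exact ⟨h, hω.2⟩
    have h4 : μ (A m) + μ (A j) ≤ μ (A m) + μ (A j \ B m) := by
      calc μ (A m) + μ (A j) ≤ μ (A m ∪ A j) := hadd
        _ = μ ((A m ∪ A j) ∩ B m) + μ ((A m ∪ A j) \ B m) := hdec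
        _ ≤ μ (A m) + μ (A j \ B m) := add_le_add h2 h3
    have hAmne : μ (A m) ≠ ⊤ := (measure_lt_top μ _).ne
    have h5 : μ (A j) ≤ μ (A j \ B m) := ENNReal.le_of_add_le_add_left hAmne h4
    have h6 : μ (A j ∩ B m) + μ (A j \ B m) = μ (A j) := measure_inter_add_diff _ (hBmeas m)
    have hdne : μ (A j \ B m) ≠ ⊤ := (measure_lt_top μ _).ne
    have : μ (A j ∩ B m) + μ (A j \ B m) ≤ 0 + μ (A j \ B m) := by
      rw [h6, zero_add]
      exact h5
    simpa using ENNReal.le_of_add_le_add_right hdne this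
  -- B m \ A m is null
  have hnull : μ (B m \ A m) = 0 := by
    have hsub : B m \ A m ⊆ ⋃ j, (if j = m then ∅ else A j ∩ B m) := by
      intro ω hω
      have : ω ∈ ⋃ l, A l := hc ▸ Set.mem_univ ω
      rw [Set.mem_iUnion] at this
      obtain ⟨l, hl⟩ := this
      have hlm : l ≠ m := fun h => hω.2 (h ▸ hl)
      refine Set.mem_iUnion.2 ⟨l, ?_⟩
      simp [hlm, hl, hω.1]
    refine measure_mono_null hsub ?_
    refine measure_iUnion_null fun j => ?_
    by_cases h : j = m
    · simp [h]
    · simpa [h] using key j h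
  refine NullMeasurableSet.congr (hBmeas m).nullMeasurableSet ?_
  rw [MeasureTheory.ae_eq_set]
  constructor
  · exact hnull
  · have hem : A m \ B m = ∅ := by
      rw [Set.diff_eq_empty]
      exact hBsub m
    rw [hem]
    exact measure_empty

lemma aemeasurable_nat_of_fibers {X : Ω → ℕ}
    (h : ∀ m, NullMeasurableSet {ω | X ω = m} μ) : AEMeasurable X μ := by
  have hnm : NullMeasurable X μ := by
    intro s _
    rw [← Set.biUnion_preimage_singleton]
    exact NullMeasurableSet.biUnion s.to_countable (fun m _ => h m)
  exact hnm.aemeasurable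

variable {Ω : Type*} [MeasurableSpace Ω] {μ : Measure Ω}

lemma geom_mgf [IsProbabilityMeasure μ] {X : Ω → ℕ} (hX : Measurable X)
    {q : ℝ} (hq0 : 0 ≤ q) (hq1 : q < 1)
    (hpmf : ∀ m : ℕ, μ {ω | X ω = m} = ENNReal.ofReal ((1 - q) * q ^ m))
    {t : ℝ} (ht : q * Real.exp t < 1) :
    Integrable (fun ω => Real.exp (t * (X ω : ℝ))) μ ∧
      mgf (fun ω => (X ω : ℝ)) μ t = (1 - q) / (1 - q * Real.exp t) := by
  set x : ℝ := q * Real.exp t with hx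
  have hx0 : 0 ≤ x := by positivity
  have hp0 : 0 < 1 - q := by linarith
  set ν : Measure ℕ := μ.map X with hν
  have hνm : ∀ m : ℕ, ν {m} = ENNReal.ofReal ((1 - q) * q ^ m) := by
    intro m
    rw [hν, Measure.map_apply hX (measurableSet_singleton m)]
    exact hpmf m
  have hterm : ∀ m : ℕ, Real.exp (t * (m : ℝ)) * ((1 - q) * q ^ m) = (1 - q) * x ^ m := by
    intro m
    rw [hx, mul_pow, ← Real.exp_nat_mul]
    ring_nf
  -- integrability on ν
  have hfi : Integrable (fun m : ℕ => Real.exp (t * (m : ℝ))) ν := by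
    refine ⟨Measurable.aestronglyMeasurable Measurable.of_discrete, ?_⟩
    rw [hasFiniteIntegral_iff_ofReal (Eventually.of_forall fun m => (Real.exp_pos _).le)]
    rw [lintegral_countable' (fun m : ℕ => ENNReal.ofReal (Real.exp (t * (m : ℝ))))]
    have : ∀ m : ℕ, ENNReal.ofReal (Real.exp (t * (m : ℝ))) * ν {m}
        = ENNReal.ofReal ((1 - q) * x ^ m) := by
      intro m
      rw [hνm m, ← ENNReal.ofReal_mul (Real.exp_pos _).le, hterm m]
    rw [tsum_congr this]
    have hsumm : Summable (fun m : ℕ => (1 - q) * x ^ m) :=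
      (summable_geometric_of_lt_one hx0 ht).mul_left _
    rw [← ENNReal.ofReal_tsum_of_nonneg (fun m => by positivity) hsumm]
    exact ENNReal.ofReal_lt_top
  have hint : Integrable (fun ω => Real.exp (t * (X ω : ℝ))) μ := by
    have := (integrable_map_measure
      (Measurable.aestronglyMeasurable (Measurable.of_discrete
        (f := fun m : ℕ => Real.exp (t * (m : ℝ))))) hX.aemeasurable).mp hfi
    exact this
  refine ⟨hint, ?_⟩
  have hmap : mgf (fun ω => (X ω : ℝ)) μ t = ∫ m : ℕ, Real.exp (t * (m : ℝ)) ∂ν := by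
    rw [mgf, hν, integral_map hX.aemeasurable
      (Measurable.aestronglyMeasurable Measurable.of_discrete)]
  rw [hmap, integral_countable' hfi]
  have hterm2 : ∀ m : ℕ, ν.real {m} • Real.exp (t * (m : ℝ)) = (1 - q) * x ^ m := by
    intro m
    rw [measureReal_def, hνm m, smul_eq_mul, ENNReal.toReal_ofReal (by positivity), mul_comm]
    exact hterm m
  rw [tsum_congr hterm2, tsum_mul_left, tsum_geometric_of_lt_one hx0 ht,
    div_eq_mul_inv]

lemma cgf_geom_eq [IsProbabilityMeasure μ] {X : Ω → ℕ} (hX : Measurable X)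
    {q : ℝ} (hq0 : 0 ≤ q) (hq1 : q < 1)
    (hpmf : ∀ m : ℕ, μ {ω | X ω = m} = ENNReal.ofReal ((1 - q) * q ^ m))
    {t : ℝ} (ht : q * Real.exp t < 1) :
    cgf (fun ω => (X ω : ℝ)) μ t
      = Real.log (1 - q) + ∑' l : ℕ, q ^ (l + 1) / ((l : ℝ) + 1)
          * Real.exp (((l : ℝ) + 1) * t) := by
  have h := geom_mgf hX hq0 hq1 hpmf ht
  have hx0 : (0 : ℝ) ≤ q * Real.exp t := by positivity
  have hp0 : 0 < 1 - q := by linarith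
  have hd0 : 0 < 1 - q * Real.exp t := by linarith
  rw [cgf, h.2, Real.log_div hp0.ne' hd0.ne']
  congr 1
  have habs : |q * Real.exp t| < 1 := by
    rw [abs_of_nonneg hx0]
    exact ht
  have hlog := (hasSum_pow_div_log_of_abs_lt_one habs).tsum_eq
  have hterm : ∀ l : ℕ, (q * Real.exp t) ^ (l + 1) / ((l : ℝ) + 1)
      = q ^ (l + 1) / ((l : ℝ) + 1) * Real.exp (((l : ℝ) + 1) * t) := by
    intro l
    have he : Real.exp (((l : ℝ) + 1) * t) = (Real.exp t) ^ (l + 1) := by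
      rw [← Real.exp_nat_mul]
      push_cast
      ring_nf
    rw [he, mul_pow]
    ring
  rw [sub_eq_add_neg, ← hlog]
  congr 1
  exact tsum_congr hterm

variable {Ω : Type*} [MeasurableSpace Ω] {μ : Measure Ω}

lemma iIndepFun_congr_ae {ι : Type*} {β : ι → Type*} {m : ∀ i, MeasurableSpace (β i)}
    {f g : ∀ i, Ω → β i} (hfg : ∀ i, f i =ᵐ[μ] g i)
    (h : iIndepFun (m := m) f μ) : iIndepFun (m := m) g μ := by
  rw [iIndepFun_iff_measure_inter_preimage_eq_mul] at h ⊢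
  intro S sets hsets
  have hae : ∀ (i : ι) (s : Set (β i)), (f i ⁻¹' s : Set Ω) =ᵐ[μ] (g i ⁻¹' s : Set Ω) := by
    intro i s
    filter_upwards [hfg i] with ω hω
    show (f i ω ∈ s) = (g i ω ∈ s)
    rw [hω]
  have hinter : ((⋂ i ∈ S, f i ⁻¹' sets i : Set Ω)) =ᵐ[μ] ((⋂ i ∈ S, g i ⁻¹' sets i : Set Ω)) := by
    have hall : ∀ᵐ ω ∂μ, ∀ i ∈ S, f i ω = g i ω := by
      rw [Filter.eventually_all_finset]
      exact fun i _ => hfg i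
    filter_upwards [hall] with ω hω
    show (ω ∈ ⋂ i ∈ S, f i ⁻¹' sets i) = (ω ∈ ⋂ i ∈ S, g i ⁻¹' sets i)
    simp only [Set.mem_iInter, Set.mem_preimage, eq_iff_iff]
    constructor
    · intro h' i hi
      exact (hω i hi) ▸ h' i hi
    · intro h' i hi
      exact (hω i hi).symm ▸ h' i hi
  rw [← measure_congr hinter, h S hsets]
  exact Finset.prod_congr rfl fun i _ => measure_congr (hae i (sets i))

lemma mgf_congr_ae {X Y : Ω → ℝ} (h : X =ᵐ[μ] Y) {t : ℝ} : mgf X μ t = mgf Y μ t := by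
  unfold mgf
  apply integral_congr_ae
  filter_upwards [h] with ω hω
  rw [hω]

end Aux

/-- Let `G_1, …, G_{n-1}` be independent, `G_k` geometric on `ℕ` with success probability
`k/(k+θ)`, and let `S_n = ∑_{k=1}^{n-1} G_k` be the number of segregating sites. Then for
every `i ≥ 1` the `i`-th cumulant of `S_n` equals
`∑_{k=1}^{n-1} Li_{1-i}(θ/(k+θ)) = ∑_{b=1}^{i} S(i,b) (b-1)! θ^b H_{n-1}^{(b)}`. -/
theorem segregating_sites_cumulants {Ω : Type*} [MeasurableSpace Ω] (μ : Measure Ω)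
    [IsProbabilityMeasure μ] (θ : ℝ) (hθ : 0 < θ) (n : ℕ) (hn : 2 ≤ n)
    (G : ℕ → Ω → ℕ)
    (hindep : iIndepFun (fun k : Fin (n - 1) => G (k + 1)) μ)
    (hgeom : ∀ k : ℕ, 1 ≤ k → k ≤ n - 1 → ∀ m : ℕ,
      μ {ω | G k ω = m} = ENNReal.ofReal ((k / (k + θ)) * (θ / (k + θ)) ^ m))
    (i : ℕ) (hi : 1 ≤ i) :
    iteratedDeriv i
        (cgf (fun ω => ((∑ k ∈ Finset.Icc 1 (n - 1), G k ω : ℕ) : ℝ)) μ) 0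
      = ∑ k ∈ Finset.Icc 1 (n - 1),
          ∑' l : ℕ, ((l : ℝ) + 1) ^ (i - 1) * (θ / (k + θ)) ^ (l + 1)
    ∧ iteratedDeriv i
        (cgf (fun ω => ((∑ k ∈ Finset.Icc 1 (n - 1), G k ω : ℕ) : ℝ)) μ) 0
      = ∑ b ∈ Finset.Icc 1 i,
          (stirling2 i b : ℝ) * Nat.factorial (b - 1) * θ ^ b
            * ∑ k ∈ Finset.Icc 1 (n - 1), 1 / (k : ℝ) ^ b := by
  open Finset Real Filter Set in
  -- basic quantities
  set q : ℕ → ℝ := fun k => θ / ((k : ℝ) + θ) with hqdef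
  have hr0 : 0 < θ / (1 + θ) := by positivity
  have hr1 : θ / (1 + θ) < 1 := by
    rw [div_lt_one (by positivity)]
    linarith
  set ρ : ℝ := Real.sqrt (θ / (1 + θ)) with hρdef
  have hρ0 : 0 < ρ := Real.sqrt_pos.2 hr0
  have hρ1 : ρ < 1 := by
    have h := Real.sqrt_lt_sqrt hr0.le hr1
    rwa [Real.sqrt_one] at h
  have hρsq : ρ * ρ = θ / (1 + θ) := Real.mul_self_sqrt hr0.le
  set ε : ℝ := -Real.log ρ with hεdef
  have hε : 0 < ε := by
    rw [hεdef, neg_pos]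
    exact Real.log_neg hρ0 hρ1
  have hexpε : Real.exp ε = ρ⁻¹ := by
    rw [hεdef, Real.exp_neg, Real.exp_log hρ0]
  -- facts about q k for k in range
  have hkpos : ∀ k : ℕ, 1 ≤ k → (0 : ℝ) < (k : ℝ) + θ := by
    intro k hk
    have : (1 : ℝ) ≤ (k : ℝ) := by exact_mod_cast hk
    linarith
  have hq0 : ∀ k : ℕ, 1 ≤ k → 0 ≤ q k := by
    intro k hk
    have := hkpos k hk
    positivity
  have hq1 : ∀ k : ℕ, 1 ≤ k → q k < 1 := by
    intro k hk
    rw [hqdef]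
    simp only []
    rw [div_lt_one (hkpos k hk)]
    have : (1 : ℝ) ≤ (k : ℝ) := by exact_mod_cast hk
    linarith
  have hqr : ∀ k : ℕ, 1 ≤ k → q k ≤ θ / (1 + θ) := by
    intro k hk
    have h1 : (1 : ℝ) ≤ (k : ℝ) := by exact_mod_cast hk
    apply div_le_div_of_nonneg_left hθ.le (by positivity)
    linarith
  have hqt : ∀ k : ℕ, 1 ≤ k → ∀ t ∈ Ioo (-ε) ε, q k * Real.exp t ≤ ρ := by
    intro k hk t ht
    have h1 : Real.exp t ≤ ρ⁻¹ := by
      rw [← hexpε]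
      exact Real.exp_le_exp.2 ht.2.le
    calc q k * Real.exp t ≤ (θ / (1 + θ)) * Real.exp t :=
          mul_le_mul_of_nonneg_right (hqr k hk) (Real.exp_pos t).le
      _ ≤ (θ / (1 + θ)) * ρ⁻¹ := mul_le_mul_of_nonneg_left h1 hr0.le
      _ = ρ := by
          rw [← hρsq]
          field_simp
  have hqt1 : ∀ k : ℕ, 1 ≤ k → ∀ t ∈ Ioo (-ε) ε, q k * Real.exp t < 1 := by
    intro k hk t ht
    exact lt_of_le_of_lt (hqt k hk t ht) hρ1
  have hpq : ∀ k : ℕ, 1 ≤ k → ((k : ℝ) / ((k : ℝ) + θ)) = 1 - q k := by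
    intro k hk
    have := hkpos k hk
    rw [hqdef]
    field_simp
    ring
  -- a.e.-measurability of G k
  have hAE : ∀ k ∈ Finset.Icc 1 (n - 1), AEMeasurable (G k) μ := by
    intro k hk
    rw [Finset.mem_Icc] at hk
    set A : ℕ → Set Ω := fun m => {ω | G k ω = m} with hA
    have hd : ∀ m j : ℕ, m ≠ j → Disjoint (A m) (A j) := by
      intro m j hmj
      rw [Set.disjoint_left]
      intro ω h1 h2
      exact hmj (h1.symm.trans h2)
    have hc : (⋃ m, A m) = Set.univ := by
      ext ω
      simp only [Set.mem_iUnion, Set.mem_univ, iff_true]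
      exact ⟨G k ω, rfl⟩
    have hsum : ∑' m, μ (A m) = 1 := by
      have hterm : ∀ m : ℕ, μ (A m)
          = ENNReal.ofReal ((1 - q k) * (q k) ^ m) := by
        intro m
        rw [hA]
        rw [hgeom k hk.1 hk.2 m, hpq k hk.1]
      rw [tsum_congr hterm]
      have hs : Summable (fun m : ℕ => (1 - q k) * (q k) ^ m) :=
        (summable_geometric_of_lt_one (hq0 k hk.1) (hq1 k hk.1)).mul_left _
      rw [← ENNReal.ofReal_tsum_of_nonneg (fun m => by
        have h1 := hq1 k hk.1
        have h2 := hq0 k hk.1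
        exact mul_nonneg (by linarith) (pow_nonneg h2 m)) hs]
      rw [tsum_mul_left, tsum_geometric_of_lt_one (hq0 k hk.1) (hq1 k hk.1)]
      rw [mul_inv_cancel₀ (by
        have h1 := hq1 k hk.1
        linarith)]
      exact ENNReal.ofReal_one
    exact aemeasurable_nat_of_fibers
      (fun m => nullMeasurableSet_of_partition hd hc hsum m)
  -- measurable modifications
  have hXex : ∀ k : ℕ, ∃ X : Ω → ℕ, Measurable X ∧
      (k ∈ Finset.Icc 1 (n - 1) → G k =ᵐ[μ] X) := by
    intro k
    by_cases hk : k ∈ Finset.Icc 1 (n - 1)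
    · exact ⟨(hAE k hk).mk (G k), (hAE k hk).measurable_mk,
        fun _ => (hAE k hk).ae_eq_mk⟩
    · exact ⟨fun _ => 0, measurable_const, fun h => absurd h hk⟩
  choose X hXm hXe using hXex
  have hmem : ∀ j : Fin (n - 1), (j : ℕ) + 1 ∈ Finset.Icc 1 (n - 1) := by
    intro j
    rw [Finset.mem_Icc]
    exact ⟨le_add_self, by omega⟩
  have hXpmf : ∀ k ∈ Finset.Icc 1 (n - 1), ∀ m : ℕ,
      μ {ω | X k ω = m} = ENNReal.ofReal ((1 - q k) * (q k) ^ m) := by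
    intro k hk m
    rw [Finset.mem_Icc] at hk
    have hae : ({ω | X k ω = m} : Set Ω) =ᵐ[μ] ({ω | G k ω = m} : Set Ω) := by
      filter_upwards [hXe k (Finset.mem_Icc.2 hk)] with ω hω
      show (X k ω = m) = (G k ω = m)
      rw [hω]
    rw [measure_congr hae, hgeom k hk.1 hk.2 m, hpq k hk.1]
  -- independence of modifications
  have hindep' : iIndepFun
      (fun j : Fin (n - 1) => X ((j : ℕ) + 1)) μ :=
    iIndepFun_congr_ae (fun j => hXe ((j : ℕ) + 1) (hmem j)) hindep
  set Y : Fin (n - 1) → Ω → ℝ := fun j ω => (X ((j : ℕ) + 1) ω : ℝ) with hYdef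
  have hYindep : iIndepFun Y μ :=
    hindep'.comp (fun _ (m : ℕ) => (m : ℝ)) (fun _ => Measurable.of_discrete)
  have hYm : ∀ j : Fin (n - 1), Measurable (Y j) :=
    fun j => Measurable.of_discrete.comp (hXm ((j : ℕ) + 1))
  -- reindexing sums
  have hreindex : ∀ f : ℕ → ℝ, ∑ k ∈ Finset.Icc 1 (n - 1), f k
      = ∑ j : Fin (n - 1), f ((j : ℕ) + 1) := by
    intro f
    rw [Fin.sum_univ_eq_sum_range (fun j => f (j + 1)) (n - 1)]
    rw [← Finset.Ico_add_one_right_eq_Icc, Finset.sum_Ico_eq_sum_range]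
    apply Finset.sum_congr
    · congr 1
    · intro b _
      congr 1
      omega
  -- a.e. equality of the summed variables
  have hall : ∀ᵐ ω ∂μ, ∀ k ∈ Finset.Icc 1 (n - 1), G k ω = X k ω := by
    rw [Filter.eventually_all_finset]
    exact fun k hk => hXe k hk
  have hSae : (fun ω => ((∑ k ∈ Finset.Icc 1 (n - 1), G k ω : ℕ) : ℝ))
      =ᵐ[μ] (∑ j : Fin (n - 1), Y j) := by
    filter_upwards [hall] with ω hω
    calc ((∑ k ∈ Finset.Icc 1 (n - 1), G k ω : ℕ) : ℝ)
        = ∑ k ∈ Finset.Icc 1 (n - 1), ((G k ω : ℕ) : ℝ) := by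
          push_cast
          rfl
      _ = ∑ k ∈ Finset.Icc 1 (n - 1), ((X k ω : ℕ) : ℝ) :=
          Finset.sum_congr rfl fun k hk => by rw [hω k hk]
      _ = ∑ j : Fin (n - 1), ((X ((j : ℕ) + 1) ω : ℕ) : ℝ) :=
          hreindex (fun k => ((X k ω : ℕ) : ℝ))
      _ = (∑ j : Fin (n - 1), Y j) ω := by
          rw [Finset.sum_apply]
  -- cgf on the interval
  have hFeq : ∀ t ∈ Ioo (-ε) ε,
      cgf (fun ω => ((∑ k ∈ Finset.Icc 1 (n - 1), G k ω : ℕ) : ℝ)) μ t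
        = ∑ k ∈ Finset.Icc 1 (n - 1), (Real.log (1 - q k) + psi (q k) t) := by
    intro t ht
    have hInt : ∀ j ∈ (Finset.univ : Finset (Fin (n - 1))),
        Integrable (fun ω => Real.exp (t * Y j ω)) μ := by
      intro j _
      exact (geom_mgf (hXm ((j : ℕ) + 1)) (hq0 _ le_add_self) (hq1 _ le_add_self)
        (hXpmf _ (hmem j)) (hqt1 _ le_add_self t ht)).1
    have h1 : cgf (fun ω => ((∑ k ∈ Finset.Icc 1 (n - 1), G k ω : ℕ) : ℝ)) μ t
        = cgf (∑ j : Fin (n - 1), Y j) μ t := by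
      unfold cgf
      rw [mgf_congr_ae hSae]
    rw [h1, hYindep.cgf_sum hYm hInt]
    rw [hreindex (fun k => Real.log (1 - q k) + psi (q k) t)]
    apply Finset.sum_congr rfl
    intro j _
    have := cgf_geom_eq (hXm ((j : ℕ) + 1)) (hq0 _ le_add_self) (hq1 _ le_add_self)
      (hXpmf _ (hmem j)) (hqt1 _ le_add_self t ht)
    rw [this]
    rfl
  -- transfer iterated derivative
  have hFev : cgf (fun ω => ((∑ k ∈ Finset.Icc 1 (n - 1), G k ω : ℕ) : ℝ)) μ
      =ᶠ[nhds (0 : ℝ)] fun t => ∑ k ∈ Finset.Icc 1 (n - 1),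
        (Real.log (1 - q k) + psi (q k) t) := by
    apply Filter.eventuallyEq_of_mem (isOpen_Ioo.mem_nhds (Set.mem_Ioo.mpr ⟨neg_lt_zero.mpr hε, hε⟩))
    exact hFeq
  obtain ⟨i', rfl⟩ : ∃ i', i = i' + 1 := ⟨i - 1, by omega⟩
  have hmain : iteratedDeriv (i' + 1)
      (cgf (fun ω => ((∑ k ∈ Finset.Icc 1 (n - 1), G k ω : ℕ) : ℝ)) μ) 0
      = ∑ k ∈ Finset.Icc 1 (n - 1), phi (q k) i' 0 := by
    rw [hFev.iteratedDeriv_eq (i' + 1)]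
    exact iteratedDeriv_sum_psi hρ0.le hρ1 hε
      (fun k hk => hq0 k (Finset.mem_Icc.mp hk).1)
      (fun k hk => hqt k (Finset.mem_Icc.mp hk).1) i'
      (Set.mem_Ioo.mpr ⟨neg_lt_zero.mpr hε, hε⟩)
  have hphi0 : ∀ k : ℕ, phi (q k) i' 0
      = ∑' l : ℕ, ((l : ℝ) + 1) ^ ((i' + 1) - 1) * (θ / ((k : ℝ) + θ)) ^ (l + 1) := by
    intro k
    unfold phi
    apply tsum_congr
    intro l
    rw [mul_zero, Real.exp_zero, mul_one]
    norm_num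
    exact Or.inl rfl
  have goal1 : iteratedDeriv (i' + 1)
      (cgf (fun ω => ((∑ k ∈ Finset.Icc 1 (n - 1), G k ω : ℕ) : ℝ)) μ) 0
      = ∑ k ∈ Finset.Icc 1 (n - 1),
          ∑' l : ℕ, ((l : ℝ) + 1) ^ ((i' + 1) - 1) * (θ / ((k : ℝ) + θ)) ^ (l + 1) := by
    rw [hmain]
    exact Finset.sum_congr rfl fun k _ => hphi0 k
  refine ⟨goal1, goal1.trans ?_⟩
  -- second identity
  have hkey : ∀ k ∈ Finset.Icc 1 (n - 1),
      ∑' l : ℕ, ((l : ℝ) + 1) ^ ((i' + 1) - 1) * (θ / ((k : ℝ) + θ)) ^ (l + 1)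
        = ∑ b ∈ Finset.range (i' + 1), (stirling2 (i' + 1) (b + 1) : ℝ)
            * (Nat.factorial b : ℝ) * (θ / (k : ℝ)) ^ (b + 1) := by
    intro k hk
    rw [Finset.mem_Icc] at hk
    have h1 := tsum_geom_moment (i := i' + 1) (by omega) (hq0 k hk.1) (hq1 k hk.1)
    have h2 : q k / (1 - q k) = θ / (k : ℝ) := by
      have hk0 : (0 : ℝ) < (k : ℝ) := by
        have : (1 : ℝ) ≤ (k : ℝ) := by exact_mod_cast hk.1
        linarith
      have hkθ := hkpos k hk.1
      have h4 : ((k : ℝ) + θ) ≠ 0 := hkθ.ne'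
      have h5 : (k : ℝ) ≠ 0 := hk0.ne'
      rw [← hpq k hk.1]
      show θ / ((k : ℝ) + θ) / ((k : ℝ) / ((k : ℝ) + θ)) = θ / (k : ℝ)
      rw [div_div_div_cancel_right₀]
      exact h4
    rw [h1, h2]
  rw [Finset.sum_congr rfl hkey]
  rw [Finset.sum_comm]
  have hIcc : ∀ (g : ℕ → ℝ), ∑ b ∈ Finset.Icc 1 (i' + 1), g b
      = ∑ b ∈ Finset.range (i' + 1), g (b + 1) := by
    intro g
    rw [← Finset.Ico_add_one_right_eq_Icc, Finset.sum_Ico_eq_sum_range]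
    apply Finset.sum_congr
    · congr 1
    · intro b _
      congr 1
      omega
  rw [hIcc]
  apply Finset.sum_congr rfl
  intro b _
  rw [Finset.mul_sum]
  apply Finset.sum_congr rfl
  intro k hk
  rw [Finset.mem_Icc] at hk
  have hk0 : (0 : ℝ) < (k : ℝ) := by
    have : (1 : ℝ) ≤ (k : ℝ) := by exact_mod_cast hk.1
    linarith
  rw [div_pow, div_eq_mul_inv, ← one_div]
  simp only [Nat.add_sub_cancel]
  rw [one_div, mul_assoc]
  ring
end

section
/- Let θ > 0, let n ≥ 2, and let G_1, …, G_{n-1} be independent random variables where G_k is geometric on ℕ₀ with success probability k/(k+θ). Set S_n = ∑_{k=1}^{n-1} G_k. Then for every m ∈ ℕ₀, P(S_n = m) = ((n-1)/θ) · ∑_{k=1}^{n-1} (-1)^{k-1} C(n-2, k-1) (θ/(k+θ))^{m+1}, where C(n, k) denotes the binomial coefficient. -/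
open MeasureTheory ProbabilityTheory

open Finset

noncomputable def ssP (θ : ℝ) (k m : ℕ) : ℝ := ((k:ℝ)/(k+θ)) * (θ/(k+θ))^m

noncomputable def ssQ (θ : ℝ) (j m : ℕ) : ℝ :=
  ((j:ℝ)/θ) * ∑ k ∈ Finset.Icc 1 j,
    (-1:ℝ)^(k-1) * (Nat.choose (j-1) (k-1) : ℝ) * (θ/((k:ℝ)+θ))^(m+1)

lemma ss_alt (j : ℕ) (hj : 1 ≤ j) :
    ∑ k ∈ Finset.Icc 1 j, (-1:ℝ)^(k-1) * (Nat.choose j (k-1) : ℝ) = (-1:ℝ)^(j-1) := by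
  have h0 : ∑ k ∈ Finset.Icc 1 j, (-1:ℝ)^(k-1) * (Nat.choose j (k-1) : ℝ)
      = ∑ i ∈ Finset.range j, (-1:ℝ)^i * (Nat.choose j i : ℝ) := by
    rw [← Finset.Ico_add_one_right_eq_Icc, Finset.sum_Ico_eq_sum_range]
    simp
  have h1 := Int.alternating_sum_range_choose (n := j)
  rw [Finset.sum_range_succ] at h1
  have hj0 : j ≠ 0 := by omega
  simp [hj0] at h1
  have h2 : ((∑ i ∈ Finset.range j, (-1:ℤ)^i * (Nat.choose j i : ℤ) : ℤ) : ℝ)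
      = ∑ i ∈ Finset.range j, (-1:ℝ)^i * (Nat.choose j i : ℝ) := by
    push_cast; exact Finset.sum_congr rfl fun i _ => by ring
  have h3 : ∑ i ∈ Finset.range j, (-1:ℤ)^i * (Nat.choose j i : ℤ) = -(-1)^j := by omega
  rw [h0, ← h2, h3]
  push_cast
  obtain ⟨j, rfl⟩ := Nat.exists_eq_add_of_le hj
  rw [add_comm]
  simp [pow_succ]

lemma ss_conv (θ : ℝ) (hθ : 0 < θ) (j : ℕ) (hj : 1 ≤ j) (m : ℕ) :
    ∑ i ∈ Finset.range (m+1), ssQ θ j i * ssP θ (j+1) (m-i) = ssQ θ (j+1) m := by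
  have hpos : ∀ k : ℕ, (0:ℝ) < (k:ℝ) + θ := fun k => by positivity
  have hne : ∀ k : ℕ, ((k:ℝ) + θ) ≠ 0 := fun k => (hpos k).ne'
  set b : ℝ := θ/((j:ℝ)+1+θ) with hb
  -- rewrite ssP (j+1) l
  have hP : ∀ l : ℕ, ssP θ (j+1) l = (((j:ℝ)+1)/θ) * b^(l+1) := by
    intro l
    have h1 : ((j+1:ℕ):ℝ) = (j:ℝ)+1 := by push_cast; ring
    rw [ssP, h1, hb, pow_succ']
    have := hne (j+1)
    rw [h1] at this
    field_simp
  -- the inner geometric sum, for each k ∈ Icc 1 j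
  have key : ∀ k ∈ Finset.Icc 1 j,
      ∑ i ∈ Finset.range (m+1),
        ((j:ℝ)/θ) * ((-1:ℝ)^(k-1) * (Nat.choose (j-1) (k-1) : ℝ) * (θ/((k:ℝ)+θ))^(i+1))
          * ((((j:ℝ)+1)/θ) * b^(m-i+1))
      = (((j:ℝ)+1)/θ) * ((-1:ℝ)^(k-1) * (Nat.choose j (k-1) : ℝ))
          * ((θ/((k:ℝ)+θ))^(m+1) - b^(m+1)) := by
    intro k hk
    rw [Finset.mem_Icc] at hk
    set a : ℝ := θ/((k:ℝ)+θ) with ha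
    have hab : a - b = θ*(((j:ℝ)+1)-k)/(((k:ℝ)+θ)*((j:ℝ)+1+θ)) := by
      rw [ha, hb]
      field_simp
      ring
    have hjk : (0:ℝ) < ((j:ℝ)+1)-k := by
      have : (k:ℝ) ≤ j := by exact_mod_cast hk.2
      linarith
    have habne : a - b ≠ 0 := by
      rw [hab]; positivity
    have hgeom : ∑ i ∈ Finset.range (m+1), a^i * b^(m-i)
        = (a^(m+1) - b^(m+1))/(a-b) := by
      rw [eq_div_iff habne, ← geom_sum₂_mul]
      congr 1
    have hsum : ∑ i ∈ Finset.range (m+1), a^(i+1) * b^(m-i+1)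
        = (a*b) * ((a^(m+1) - b^(m+1))/(a-b)) := by
      rw [← hgeom, Finset.mul_sum]
      refine Finset.sum_congr rfl fun i _ => by ring
    have hstep : ∑ i ∈ Finset.range (m+1),
        ((j:ℝ)/θ) * ((-1:ℝ)^(k-1) * (Nat.choose (j-1) (k-1) : ℝ) * a^(i+1))
          * ((((j:ℝ)+1)/θ) * b^(m-i+1))
        = ((j:ℝ)/θ) * (((j:ℝ)+1)/θ) * ((-1:ℝ)^(k-1) * (Nat.choose (j-1) (k-1) : ℝ))
          * ((a*b) * ((a^(m+1) - b^(m+1))/(a-b))) := by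
      rw [← hsum, Finset.mul_sum]
      refine Finset.sum_congr rfl fun i _ => by ring
    rw [hstep]
    -- coefficient identity
    have hc : (j:ℝ) * (Nat.choose (j-1) (k-1) : ℝ)
        = (Nat.choose j (k-1) : ℝ) * (((j:ℝ)+1)-k) := by
      have h1 : j * Nat.choose (j-1) (k-1) = Nat.choose j k * k := by
        have := Nat.add_one_mul_choose_eq (j-1) (k-1)
        have e1 : (j-1)+1 = j := by omega
        have e2 : (k-1)+1 = k := by omega
        rw [e1, e2] at this
        omega
      have h2 : Nat.choose j k * k = Nat.choose j (k-1) * (j+1-k) := by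
        have := Nat.choose_succ_right_eq j (k-1)
        have e2 : (k-1)+1 = k := by omega
        rw [e2] at this
        have e3 : j - (k-1) = j+1-k := by omega
        rw [e3] at this
        exact this
      have h3 : j * Nat.choose (j-1) (k-1) = Nat.choose j (k-1) * (j+1-k) := by omega
      have h4 : ((j+1-k : ℕ) : ℝ) = ((j:ℝ)+1)-k := by
        have : k ≤ j+1 := by omega
        push_cast [Nat.cast_sub this]
        ring
      calc (j:ℝ) * (Nat.choose (j-1) (k-1) : ℝ)
          = ((j * Nat.choose (j-1) (k-1) : ℕ) : ℝ) := by push_cast; ring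
        _ = ((Nat.choose j (k-1) * (j+1-k) : ℕ) : ℝ) := by norm_cast
        _ = (Nat.choose j (k-1) : ℝ) * (((j:ℝ)+1)-k) := by push_cast [Nat.cast_sub (show k ≤ j+1 by omega)]; ring
    have hq : a*b/(a-b) = θ/(((j:ℝ)+1)-k) := by
      rw [hab, ha, hb]
      have h1 : ((j:ℝ)+1+θ) ≠ 0 := by positivity
      have h2 : (((j:ℝ)+1)-(k:ℝ)) ≠ 0 := hjk.ne'
      field_simp
    have hcoef : ((j:ℝ)/θ) * (a*b/(a-b)) * (Nat.choose (j-1) (k-1) : ℝ)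
        = (Nat.choose j (k-1) : ℝ) := by
      rw [hq]
      rw [div_mul_div_comm]
      rw [div_mul_eq_mul_div, div_eq_iff (by positivity : θ * (((j:ℝ)+1)-k) ≠ 0)]
      linear_combination θ * hc
    linear_combination ((((j:ℝ)+1)/θ) * ((-1:ℝ)^(k-1)) * (a^(m+1) - b^(m+1))) * hcoef
  have step1 : ∑ i ∈ Finset.range (m+1), ssQ θ j i * ssP θ (j+1) (m-i)
      = ∑ k ∈ Finset.Icc 1 j, ∑ i ∈ Finset.range (m+1),
          ((j:ℝ)/θ) * ((-1:ℝ)^(k-1) * (Nat.choose (j-1) (k-1) : ℝ) * (θ/((k:ℝ)+θ))^(i+1))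
            * ((((j:ℝ)+1)/θ) * b^(m-i+1)) := by
    rw [Finset.sum_comm]
    refine Finset.sum_congr rfl fun i _ => ?_
    rw [ssQ, hP, Finset.mul_sum, Finset.sum_mul]
  rw [step1, Finset.sum_congr rfl key]
  have halt := ss_alt j hj
  have split : ∑ k ∈ Finset.Icc 1 j, (((j:ℝ)+1)/θ) * ((-1:ℝ)^(k-1) * (Nat.choose j (k-1) : ℝ))
        * ((θ/((k:ℝ)+θ))^(m+1) - b^(m+1))
      = (((j:ℝ)+1)/θ) * ((∑ k ∈ Finset.Icc 1 j,
          (-1:ℝ)^(k-1) * (Nat.choose j (k-1) : ℝ) * (θ/((k:ℝ)+θ))^(m+1))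
        - (∑ k ∈ Finset.Icc 1 j, (-1:ℝ)^(k-1) * (Nat.choose j (k-1) : ℝ)) * b^(m+1)) := by
    rw [mul_sub, Finset.mul_sum, Finset.sum_mul, Finset.mul_sum, ← Finset.sum_sub_distrib]
    exact Finset.sum_congr rfl fun k _ => by ring
  rw [split, halt, ssQ, Finset.sum_Icc_succ_top (by omega : 1 ≤ j+1)]
  have hpow : (-1:ℝ)^j = -(-1:ℝ)^(j-1) := by
    obtain ⟨i, rfl⟩ := Nat.exists_eq_add_of_le hj
    simp [pow_add]
  push_cast [Nat.add_sub_cancel, Nat.choose_self]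
  rw [hpow]
  ring

lemma adt_snoc (j m : ℕ) (F : (Fin (j+1) → ℕ) → ℝ) :
    ∑ c ∈ Finset.Nat.antidiagonalTuple (j+1) m, F c
      = ∑ pr ∈ Finset.HasAntidiagonal.antidiagonal m,
          ∑ c ∈ Finset.Nat.antidiagonalTuple j pr.1, F (Fin.snoc c pr.2) := by
  rw [Finset.sum_sigma']
  refine Finset.sum_nbij'
    (fun c => ⟨(∑ i : Fin j, c i.castSucc, c (Fin.last j)), Fin.init c⟩)
    (fun x => Fin.snoc x.2 x.1.2) ?_ ?_ ?_ ?_ ?_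
  · intro c hc
    rw [Finset.Nat.mem_antidiagonalTuple] at hc
    rw [Finset.mem_sigma, Finset.HasAntidiagonal.mem_antidiagonal, Finset.Nat.mem_antidiagonalTuple]
    constructor
    · rw [← hc, Fin.sum_univ_castSucc]
    · rfl
  · rintro ⟨⟨a, b⟩, c⟩ hx
    rw [Finset.mem_sigma, Finset.HasAntidiagonal.mem_antidiagonal, Finset.Nat.mem_antidiagonalTuple] at hx
    rw [Finset.Nat.mem_antidiagonalTuple, Fin.sum_univ_castSucc]
    simp only [Fin.snoc_castSucc, Fin.snoc_last]
    rw [hx.2, hx.1]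
  · intro c hc
    exact Fin.snoc_init_self c
  · rintro ⟨⟨a, b⟩, c⟩ hx
    rw [Finset.mem_sigma, Finset.HasAntidiagonal.mem_antidiagonal, Finset.Nat.mem_antidiagonalTuple] at hx
    simp only [Fin.snoc_castSucc, Fin.snoc_last, Fin.init_snoc]
    rw [hx.2]
  · intro c hc
    rw [Fin.snoc_init_self]

noncomputable def ssT (θ : ℝ) (j m : ℕ) : ℝ :=
  ∑ c ∈ Finset.Nat.antidiagonalTuple j m, ∏ k : Fin j, ssP θ ((k:ℕ)+1) (c k)

lemma ssT_eq (θ : ℝ) (hθ : 0 < θ) (j : ℕ) (hj : 1 ≤ j) : ∀ m : ℕ, ssT θ j m = ssQ θ j m := by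
  induction j, hj using Nat.le_induction with
  | base =>
    intro m
    rw [ssT, Finset.Nat.antidiagonalTuple_one, Finset.sum_singleton, Fin.prod_univ_one]
    rw [ssQ, Finset.Icc_self, Finset.sum_singleton]
    simp only [Matrix.cons_val_zero, ssP]
    norm_num
    rw [pow_succ']
    have h1 : (1:ℝ) + θ ≠ 0 := by positivity
    field_simp
  | succ j hj IH =>
    intro m
    rw [ssT, adt_snoc]
    have inner : ∀ pr : ℕ × ℕ,
        ∑ c ∈ Finset.Nat.antidiagonalTuple j pr.1,
          ∏ k : Fin (j+1), ssP θ ((k:ℕ)+1) ((Fin.snoc c pr.2 : Fin (j+1) → ℕ) k)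
        = ssQ θ j pr.1 * ssP θ (j+1) pr.2 := by
      intro pr
      have hprod : ∀ c : Fin j → ℕ,
          ∏ k : Fin (j+1), ssP θ ((k:ℕ)+1) ((Fin.snoc c pr.2 : Fin (j+1) → ℕ) k)
          = (∏ k : Fin j, ssP θ ((k:ℕ)+1) (c k)) * ssP θ (j+1) pr.2 := by
        intro c
        rw [Fin.prod_univ_castSucc]
        congr 1
        · refine Finset.prod_congr rfl fun k _ => ?_
          rw [Fin.snoc_castSucc, Fin.coe_castSucc]
        · rw [Fin.snoc_last, Fin.val_last]
      rw [Finset.sum_congr rfl fun c _ => hprod c, ← Finset.sum_mul, ← ssT, IH]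
    rw [Finset.sum_congr rfl fun pr _ => inner pr,
      Finset.Nat.sum_antidiagonal_eq_sum_range_succ_mk]
    exact ss_conv θ hθ j hj m

lemma ssP_nonneg (θ : ℝ) (hθ : 0 < θ) (k m : ℕ) : 0 ≤ ssP θ k m := by
  rw [ssP]; positivity

lemma ssT_nonneg (θ : ℝ) (hθ : 0 < θ) (j m : ℕ) : 0 ≤ ssT θ j m := by
  rw [ssT]
  exact Finset.sum_nonneg fun c _ => Finset.prod_nonneg fun k _ => ssP_nonneg θ hθ _ _

lemma ssR_mem (θ : ℝ) (hθ : 0 < θ) (k : ℕ) (hk : 1 ≤ k) :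
    0 ≤ θ/((k:ℝ)+θ) ∧ θ/((k:ℝ)+θ) < 1 := by
  have h1 : (0:ℝ) < (k:ℝ)+θ := by positivity
  constructor
  · positivity
  · rw [div_lt_one h1]
    have : (1:ℝ) ≤ (k:ℝ) := by exact_mod_cast hk
    linarith

lemma ssQ_summable (θ : ℝ) (hθ : 0 < θ) (j : ℕ) : Summable (fun m => ssQ θ j m) := by
  simp only [ssQ]
  apply Summable.mul_left
  apply summable_sum
  intro k hk
  rw [Finset.mem_Icc] at hk
  obtain ⟨h0, h1⟩ := ssR_mem θ hθ k hk.1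
  have : Summable (fun m : ℕ => (θ/((k:ℝ)+θ))^m) := summable_geometric_of_lt_one h0 h1
  have h2 : Summable (fun m : ℕ => (θ/((k:ℝ)+θ))^(m+1)) := by
    simp only [pow_succ]
    exact this.mul_right _
  exact h2.mul_left _

lemma ss_alt2 (j : ℕ) (hj : 1 ≤ j) :
    ∑ k ∈ Finset.Icc 1 j, (-1:ℝ)^(k-1) * (Nat.choose j k : ℝ) = 1 := by
  have h0 : ∑ k ∈ Finset.Icc 1 j, (-1:ℝ)^(k-1) * (Nat.choose j k : ℝ)
      = ∑ i ∈ Finset.range j, (-1:ℝ)^i * (Nat.choose j (i+1) : ℝ) := by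
    rw [← Finset.Ico_add_one_right_eq_Icc, Finset.sum_Ico_eq_sum_range]
    refine Finset.sum_congr rfl fun i _ => by
      simp [add_comm 1 i]
  have h1 := Int.alternating_sum_range_choose (n := j)
  rw [Finset.sum_range_succ'] at h1
  have hj0 : j ≠ 0 := by omega
  simp [hj0] at h1
  have h3 : ∑ i ∈ Finset.range j, (-1:ℤ)^i * (Nat.choose j (i+1) : ℤ) = 1 := by
    have e : ∀ i ∈ Finset.range j, (-1:ℤ)^(i+1) * (Nat.choose j (i+1) : ℤ)
        = -((-1:ℤ)^i * (Nat.choose j (i+1) : ℤ)) := fun i _ => by ring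
    rw [Finset.sum_congr rfl e, Finset.sum_neg_distrib] at h1
    omega
  have h2 : ((∑ i ∈ Finset.range j, (-1:ℤ)^i * (Nat.choose j (i+1) : ℤ) : ℤ) : ℝ)
      = ∑ i ∈ Finset.range j, (-1:ℝ)^i * (Nat.choose j (i+1) : ℝ) := by
    push_cast; exact Finset.sum_congr rfl fun i _ => by ring
  rw [h0, ← h2, h3]
  norm_num

lemma ssQ_tsum_real (θ : ℝ) (hθ : 0 < θ) (j : ℕ) (hj : 1 ≤ j) :
    ∑' m : ℕ, ssQ θ j m = 1 := by
  simp only [ssQ]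
  rw [tsum_mul_left]
  have hsum : ∀ k ∈ Finset.Icc 1 j, Summable (fun m : ℕ =>
      (-1:ℝ)^(k-1) * (Nat.choose (j-1) (k-1) : ℝ) * (θ/((k:ℝ)+θ))^(m+1)) := by
    intro k hk
    rw [Finset.mem_Icc] at hk
    obtain ⟨h0, h1⟩ := ssR_mem θ hθ k hk.1
    have h2 : Summable (fun m : ℕ => (θ/((k:ℝ)+θ))^(m+1)) := by
      simp only [pow_succ]
      exact (summable_geometric_of_lt_one h0 h1).mul_right _
    exact h2.mul_left _
  rw [Summable.tsum_finsetSum hsum]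
  have hval : ∀ k ∈ Finset.Icc 1 j,
      ∑' m : ℕ, (-1:ℝ)^(k-1) * (Nat.choose (j-1) (k-1) : ℝ) * (θ/((k:ℝ)+θ))^(m+1)
      = (-1:ℝ)^(k-1) * (Nat.choose (j-1) (k-1) : ℝ) * (θ/(k:ℝ)) := by
    intro k hk
    rw [Finset.mem_Icc] at hk
    obtain ⟨h0, h1⟩ := ssR_mem θ hθ k hk.1
    rw [tsum_mul_left]
    congr 1
    have hg : ∑' m : ℕ, (θ/((k:ℝ)+θ))^(m+1)
        = (θ/((k:ℝ)+θ)) * (1 - θ/((k:ℝ)+θ))⁻¹ := by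
      simp only [pow_succ']
      rw [tsum_mul_left, tsum_geometric_of_lt_one h0 h1]
    rw [hg]
    have hk0 : (0:ℝ) < (k:ℝ) := by exact_mod_cast hk.1
    have hkθ : (0:ℝ) < (k:ℝ)+θ := by positivity
    have h2 : 1 - θ/((k:ℝ)+θ) = (k:ℝ)/((k:ℝ)+θ) := by field_simp; ring
    rw [h2]
    field_simp
  rw [Finset.sum_congr rfl hval]
  have hterm : ∀ k ∈ Finset.Icc 1 j,
      ((j:ℝ)/θ) * ((-1:ℝ)^(k-1) * (Nat.choose (j-1) (k-1) : ℝ) * (θ/(k:ℝ)))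
      = (-1:ℝ)^(k-1) * (Nat.choose j k : ℝ) := by
    intro k hk
    rw [Finset.mem_Icc] at hk
    have h1 : j * Nat.choose (j-1) (k-1) = Nat.choose j k * k := by
      have := Nat.add_one_mul_choose_eq (j-1) (k-1)
      have e1 : (j-1)+1 = j := by omega
      have e2 : (k-1)+1 = k := by omega
      rw [e1, e2] at this
      omega
    have h1' : (j:ℝ) * (Nat.choose (j-1) (k-1) : ℝ) = (Nat.choose j k : ℝ) * (k:ℝ) := by
      exact_mod_cast congrArg (Nat.cast : ℕ → ℝ) h1
    have hk0 : ((k:ℝ)) ≠ 0 := by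
      have : (0:ℝ) < (k:ℝ) := by exact_mod_cast hk.1
      exact this.ne'
    field_simp
    linear_combination h1'
  rw [Finset.mul_sum, Finset.sum_congr rfl hterm, ss_alt2 j hj]


/-- Let `G_1, …, G_{n-1}` be independent, `G_k` geometric on `ℕ` with success probability
`k/(k+θ)`, and let `S_n = ∑_{k=1}^{n-1} G_k`. Then for every `m ∈ ℕ`,
`P(S_n = m) = ((n-1)/θ) ∑_{k=1}^{n-1} (-1)^(k-1) C(n-2, k-1) (θ/(k+θ))^(m+1)`. -/
theorem segregating_sites_pmf {Ω : Type*} [MeasurableSpace Ω] (μ : Measure Ω)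
    [IsProbabilityMeasure μ] (θ : ℝ) (hθ : 0 < θ) (n : ℕ) (hn : 2 ≤ n)
    (G : ℕ → Ω → ℕ)
    (hindep : iIndepFun (fun k : Fin (n - 1) => G (k + 1)) μ)
    (hgeom : ∀ k : ℕ, 1 ≤ k → k ≤ n - 1 → ∀ m : ℕ,
      μ {ω | G k ω = m} = ENNReal.ofReal ((k / (k + θ)) * (θ / (k + θ)) ^ m))
    (m : ℕ) :
    μ {ω | (∑ k ∈ Finset.Icc 1 (n - 1), G k ω : ℕ) = m}
      = ENNReal.ofReal ((((n : ℝ) - 1) / θ)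
          * ∑ k ∈ Finset.Icc 1 (n - 1),
              (-1 : ℝ) ^ (k - 1) * (Nat.choose (n - 2) (k - 1) : ℝ)
                * (θ / (k + θ)) ^ (m + 1)) := by
  have hJ : 1 ≤ n - 1 := by omega
  -- measure of each composition piece
  have hpiece : ∀ (c : Fin (n-1) → ℕ),
      μ (⋂ k : Fin (n-1), {ω | G ((k:ℕ)+1) ω = c k})
        = ENNReal.ofReal (∏ k : Fin (n-1), ssP θ ((k:ℕ)+1) (c k)) := by
    intro c
    rw [show (⋂ k : Fin (n-1), {ω : Ω | G ((k:ℕ)+1) ω = c k})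
        = ⋂ k : Fin (n-1), (fun ω => G ((k:ℕ)+1) ω) ⁻¹' {c k} from rfl]
    rw [hindep.meas_iInter (fun k => ⟨{c k}, measurableSet_singleton _, rfl⟩)]
    rw [ENNReal.ofReal_prod_of_nonneg (fun k _ => ssP_nonneg θ hθ _ _)]
    refine Finset.prod_congr rfl fun k _ => ?_
    have hk1 : 1 ≤ (k:ℕ)+1 := by omega
    have hk2 : (k:ℕ)+1 ≤ n-1 := by omega
    rw [show G ((k:ℕ)+1) ⁻¹' {c k} = {ω : Ω | G ((k:ℕ)+1) ω = c k} from rfl,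
      hgeom ((k:ℕ)+1) hk1 hk2 (c k)]
    rfl
  -- set identity
  have hsum_eq : ∀ ω, ∑ k ∈ Finset.Icc 1 (n-1), G k ω = ∑ k : Fin (n-1), G ((k:ℕ)+1) ω := by
    intro ω
    rw [Fin.sum_univ_eq_sum_range (fun i => G (i+1) ω) (n-1)]
    rw [← Finset.Ico_add_one_right_eq_Icc, Finset.sum_Ico_eq_sum_range]
    simp [add_comm]
  have hset : ∀ mm : ℕ, {ω : Ω | (∑ k ∈ Finset.Icc 1 (n-1), G k ω : ℕ) = mm}
      = ⋃ c ∈ Finset.Nat.antidiagonalTuple (n-1) mm,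
          ⋂ k : Fin (n-1), {ω : Ω | G ((k:ℕ)+1) ω = c k} := by
    intro mm
    ext ω
    simp only [Set.mem_setOf_eq, Set.mem_iUnion, Set.mem_iInter]
    constructor
    · intro h
      refine ⟨fun k => G ((k:ℕ)+1) ω, ?_, fun k => rfl⟩
      rw [Finset.Nat.mem_antidiagonalTuple, ← h, hsum_eq]
    · rintro ⟨c, hc, hck⟩
      rw [Finset.Nat.mem_antidiagonalTuple] at hc
      rw [hsum_eq, ← hc]
      exact Finset.sum_congr rfl fun k _ => hck k
  -- upper bound
  have hub : ∀ mm : ℕ, μ {ω : Ω | (∑ k ∈ Finset.Icc 1 (n-1), G k ω : ℕ) = mm}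
      ≤ ENNReal.ofReal (ssQ θ (n-1) mm) := by
    intro mm
    rw [hset mm]
    refine le_trans (measure_biUnion_finset_le _ _) ?_
    rw [Finset.sum_congr rfl fun c _ => hpiece c]
    rw [← ENNReal.ofReal_sum_of_nonneg
      (fun c _ => Finset.prod_nonneg fun k _ => ssP_nonneg θ hθ _ _)]
    rw [← ssT, ssT_eq θ hθ (n-1) hJ mm]
  -- total mass of the upper bound
  have hnonneg : ∀ mm : ℕ, 0 ≤ ssQ θ (n-1) mm := fun mm =>
    (ssT_eq θ hθ (n-1) hJ mm) ▸ ssT_nonneg θ hθ (n-1) mm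
  have htot : ∑' mm : ℕ, ENNReal.ofReal (ssQ θ (n-1) mm) = 1 := by
    rw [← ENNReal.ofReal_tsum_of_nonneg hnonneg (ssQ_summable θ hθ (n-1))]
    rw [ssQ_tsum_real θ hθ (n-1) hJ, ENNReal.ofReal_one]
  -- lower bound for total mass
  have hlb : (1:ENNReal) ≤ ∑' mm : ℕ,
      μ {ω : Ω | (∑ k ∈ Finset.Icc 1 (n-1), G k ω : ℕ) = mm} := by
    have huniv : (Set.univ : Set Ω)
        = ⋃ mm : ℕ, {ω : Ω | (∑ k ∈ Finset.Icc 1 (n-1), G k ω : ℕ) = mm} := by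
      ext ω; simp
    calc (1:ENNReal) = μ Set.univ := (measure_univ).symm
      _ ≤ ∑' mm : ℕ, μ {ω : Ω | (∑ k ∈ Finset.Icc 1 (n-1), G k ω : ℕ) = mm} := by
          rw [huniv]; exact measure_iUnion_le _
  -- sandwich
  have key : ∀ mm : ℕ, μ {ω : Ω | (∑ k ∈ Finset.Icc 1 (n-1), G k ω : ℕ) = mm}
      = ENNReal.ofReal (ssQ θ (n-1) mm) := by
    by_contra h
    push_neg at h
    obtain ⟨m0, hm0⟩ := h
    have hfin : ∑' mm : ℕ, μ {ω : Ω | (∑ k ∈ Finset.Icc 1 (n-1), G k ω : ℕ) = mm} ≠ ⊤ := by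
      refine ne_top_of_le_ne_top ?_ (ENNReal.tsum_le_tsum hub)
      rw [htot]; exact ENNReal.one_ne_top
    have hlt := ENNReal.tsum_lt_tsum hfin hub (lt_of_le_of_ne (hub m0) hm0)
    rw [htot] at hlt
    exact absurd (lt_of_le_of_lt hlb hlt) (lt_irrefl _)
  rw [key m, ssQ]
  congr 2
  rw [Nat.cast_sub (by omega : 1 ≤ n), Nat.cast_one]
end

section
/- Let θ > 0 and let (G_k)_{k≥1} be a sequence of independent random variables on a common probability space, where G_k is geometric on ℕ₀ with success probability k/(k+θ). Set S_n = ∑_{k=1}^{n-1} G_k for n ≥ 2. Then S_n/(θ H_{n-1}) → 1 almost surely as n → ∞, where H_{n-1} = ∑_{k=1}^{n-1} 1/k. -/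
open MeasureTheory ProbabilityTheory Filter



lemma geom0 {p q : ℝ} (hp : 0 ≤ p) (hq : 0 < q) (hpq : p + q = 1) :
    HasSum (fun a : ℕ => q * p ^ a) 1 := by
  have := (hasSum_geometric_of_lt_one hp (by linarith)).mul_left q
  have hqe : q * (1 - p)⁻¹ = 1 := by
    rw [show 1 - p = q by linarith, mul_inv_cancel₀ hq.ne']
  simpa [hqe] using this

lemma pnorm {p q : ℝ} (hp : 0 ≤ p) (hq : 0 < q) (hpq : p + q = 1) : ‖p‖ < 1 := by
  rw [Real.norm_eq_abs, abs_of_nonneg hp]; linarith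

lemma geom1 {p q : ℝ} (hp : 0 ≤ p) (hq : 0 < q) (hpq : p + q = 1) :
    HasSum (fun a : ℕ => ((a : ℝ) - p / q) * (q * p ^ a)) 0 := by
  have h1 : HasSum (fun a : ℕ => (a : ℝ) * p ^ a) (p / (1 - p) ^ 2) :=
    hasSum_coe_mul_geometric_of_norm_lt_one (pnorm hp hq hpq)
  rw [show 1 - p = q by linarith] at h1
  have h2 := (h1.mul_left q).sub ((geom0 hp hq hpq).mul_left (p / q))
  convert h2 using 2 with a
  · rfl
  · field_simp
  · field_simp; ring

lemma geom2 {p q : ℝ} (hp : 0 ≤ p) (hq : 0 < q) (hpq : p + q = 1) :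
    HasSum (fun a : ℕ => ((a : ℝ) - p / q) ^ 2 * (q * p ^ a)) (p / q ^ 2) := by
  have hchoose : HasSum (fun a : ℕ => (((a + 2).choose 2 : ℕ) : ℝ) * p ^ a) (1 / (1 - p) ^ 3) :=
    hasSum_choose_mul_geometric_of_norm_lt_one 2 (pnorm hp hq hpq)
  have h1 : HasSum (fun a : ℕ => (a : ℝ) * p ^ a) (p / (1 - p) ^ 2) :=
    hasSum_coe_mul_geometric_of_norm_lt_one (pnorm hp hq hpq)
  have h0 := geom0 hp hq hpq
  rw [show 1 - p = q by linarith] at hchoose h1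
  set m : ℝ := p / q with hm
  have key := ((hchoose.mul_left (2 * q)).sub ((h1.mul_left ((3 + 2 * m) * q)))).add
    (h0.mul_left (m ^ 2 - 2))
  have hp' : p = 1 - q := by linarith
  convert key using 1
  · rfl
  · funext a
    have hc : (((a + 2).choose 2 : ℕ) : ℝ) = ((a : ℝ) + 1) * ((a : ℝ) + 2) / 2 := by
      rw [Nat.cast_choose_two]
      push_cast
      ring
    rw [hc]; ring
  · rw [hm, hp']
    field_simp
    ring

lemma hasSum_prod_mul {ι κ : Type*} {f : ι → ℝ} {g : κ → ℝ} {s t : ℝ}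
    (hf : HasSum f s) (hg : HasSum g t) :
    HasSum (fun x : ι × κ => f x.1 * g x.2) (s * t) :=
  hf.mul hg (summable_mul_of_summable_norm
    (by simpa [Real.norm_eq_abs] using hf.summable.abs)
    (by simpa [Real.norm_eq_abs] using hg.summable.abs))

/-- Key induction: moments of products of independent pmfs over tuples. -/
lemma tuple_moments : ∀ (n : ℕ) (W : Fin n → ℕ → ℝ) (M V : Fin n → ℝ),
    (∀ k, HasSum (W k) 1) →
    (∀ k, HasSum (fun a : ℕ => ((a : ℝ) - M k) * W k a) 0) →
    (∀ k, HasSum (fun a : ℕ => ((a : ℝ) - M k) ^ 2 * W k a) (V k)) →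
    HasSum (fun f : Fin n → ℕ => ∏ k, W k (f k)) 1 ∧
    HasSum (fun f : Fin n → ℕ => (∑ k, ((f k : ℝ) - M k)) * ∏ k, W k (f k)) 0 ∧
    HasSum (fun f : Fin n → ℕ => (∑ k, ((f k : ℝ) - M k)) ^ 2 * ∏ k, W k (f k)) (∑ k, V k) := by
  intro n
  induction n with
  | zero =>
    intro W M V h0 h1 h2
    refine ⟨?_, ?_, ?_⟩ <;>
      simpa using hasSum_fintype (κ := Fin 0 → ℕ) _
  | succ n ih =>
    intro W M V h0 h1 h2
    obtain ⟨ih0, ih1, ih2⟩ := ih (fun k => W k.succ) (fun k => M k.succ) (fun k => V k.succ)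
      (fun k => h0 k.succ) (fun k => h1 k.succ) (fun k => h2 k.succ)
    let e : (ℕ × (Fin n → ℕ)) ≃ (Fin (n + 1) → ℕ) := Fin.consEquiv (fun _ : Fin (n+1) => ℕ)
    have hsum : ∀ (x : ℕ × (Fin n → ℕ)) ,
        (∑ k : Fin (n+1), (((Fin.cons x.1 x.2 : Fin (n+1) → ℕ) k : ℝ) - M k)) =
          ((x.1 : ℝ) - M 0) + ∑ k : Fin n, ((x.2 k : ℝ) - M k.succ) := by
      intro x
      rw [Fin.sum_univ_succ]
      simp
    have hprod : ∀ (x : ℕ × (Fin n → ℕ)),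
        (∏ k : Fin (n+1), W k ((Fin.cons x.1 x.2 : Fin (n+1) → ℕ) k)) =
          W 0 x.1 * ∏ k : Fin n, W k.succ (x.2 k) := by
      intro x
      rw [Fin.prod_univ_succ]
      simp
    refine ⟨?_, ?_, ?_⟩
    · rw [← e.hasSum_iff]
      have key := hasSum_prod_mul (h0 0) ih0
      rw [one_mul] at key
      convert key using 1
      funext x
      simp only [Function.comp_apply, e, Fin.consEquiv_apply]
      rw [hprod x]
    · rw [← e.hasSum_iff]
      have key := (hasSum_prod_mul (h1 0) ih0).add (hasSum_prod_mul (h0 0) ih1)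
      convert key using 1
      · funext x
        simp only [Function.comp_apply, e, Fin.consEquiv_apply]
        rw [hprod x, hsum x]
        ring
      · norm_num
    · rw [← e.hasSum_iff]
      have key := ((hasSum_prod_mul (h2 0) ih0).add
        ((hasSum_prod_mul (h1 0) ih1).mul_left 2)).add (hasSum_prod_mul (h0 0) ih2)
      convert key using 1
      · funext x
        simp only [Function.comp_apply, e, Fin.consEquiv_apply]
        rw [hprod x, hsum x]
        ring
      · rw [Fin.sum_univ_succ]
        ring

lemma chebyshev_pmf {Ω : Type*} [MeasurableSpace Ω] (μ : Measure Ω)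
    (G : ℕ → Ω → ℕ)
    (hindep : iIndepFun (fun k => G (k + 1)) μ)
    (w : ℕ → ℕ → ℝ) (M V : ℕ → ℝ)
    (hw : ∀ k a, μ {ω | G (k + 1) ω = a} = ENNReal.ofReal (w k a))
    (hwnn : ∀ k a, 0 ≤ w k a)
    (h0 : ∀ k, HasSum (w k) 1)
    (h1 : ∀ k, HasSum (fun a : ℕ => ((a : ℝ) - M k) * w k a) 0)
    (h2 : ∀ k, HasSum (fun a : ℕ => ((a : ℝ) - M k) ^ 2 * w k a) (V k))
    (n : ℕ) (A : ℝ) (hA : 0 < A) :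
    μ {ω | A ≤ |∑ k ∈ Finset.range n, ((G (k + 1) ω : ℝ) - M k)|}
      ≤ ENNReal.ofReal ((∑ k ∈ Finset.range n, V k) / A ^ 2) := by
  classical
  set Bad : Set (Fin n → ℕ) := {f | A ≤ |∑ k : Fin n, ((f k : ℝ) - M (k : ℕ))|} with hBad
  set C : (Fin n → ℕ) → Set Ω := fun f => {ω | ∀ k : Fin n, G ((k : ℕ) + 1) ω = f k} with hC
  -- inclusion
  have hincl : {ω | A ≤ |∑ k ∈ Finset.range n, ((G (k + 1) ω : ℝ) - M k)|}
      ⊆ ⋃ f : Bad, C f := by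
    intro ω hω
    refine Set.mem_iUnion.2 ⟨⟨fun k => G ((k : ℕ) + 1) ω, ?_⟩, fun k => rfl⟩
    show A ≤ |∑ k : Fin n, ((G ((k : ℕ) + 1) ω : ℝ) - M (k : ℕ))|
    rwa [Fin.sum_univ_eq_sum_range (fun k => ((G (k + 1) ω : ℝ) - M k)) n]
  -- measure of a cylinder
  have hcyl : ∀ f : Fin n → ℕ, μ (C f) = ENNReal.ofReal (∏ k : Fin n, w (k : ℕ) (f k)) := by
    intro f
    set fe : ℕ → ℕ := fun i => if h : i < n then f ⟨i, h⟩ else 0 with hfe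
    have hCeq : C f = ⋂ i ∈ Finset.range n, G (i + 1) ⁻¹' {fe i} := by
      ext ω
      simp only [hC, Set.mem_setOf_eq, Set.mem_iInter, Finset.mem_range, Set.mem_preimage,
        Set.mem_singleton_iff]
      constructor
      · intro h i hi
        simp only [hfe, dif_pos hi]
        exact h ⟨i, hi⟩
      · intro h k
        have := h k k.2
        simpa [hfe, dif_pos k.2] using this
    rw [hCeq, hindep.meas_biInter (fun i _ => ⟨{fe i}, trivial, rfl⟩)]
    have : ∀ i ∈ Finset.range n, μ (G (i + 1) ⁻¹' {fe i}) = ENNReal.ofReal (w i (fe i)) := by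
      intro i _
      rw [show G (i + 1) ⁻¹' {fe i} = {ω | G (i + 1) ω = fe i} from rfl]
      exact hw i (fe i)
    rw [Finset.prod_congr rfl this, ← ENNReal.ofReal_prod_of_nonneg (fun i _ => hwnn i (fe i))]
    congr 1
    rw [← Fin.prod_univ_eq_prod_range (fun i => w i (fe i)) n]
    refine Finset.prod_congr rfl fun k _ => ?_
    simp [hfe, dif_pos k.2]
  -- per-tuple bound
  have hptb : ∀ f : Fin n → ℕ, f ∈ Bad →
      μ (C f) ≤ ENNReal.ofReal ((∑ k : Fin n, ((f k : ℝ) - M (k : ℕ))) ^ 2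
        * (∏ k : Fin n, w (k : ℕ) (f k)) / A ^ 2) := by
    intro f hf
    rw [hcyl f]
    apply ENNReal.ofReal_le_ofReal
    have hprod : 0 ≤ ∏ k : Fin n, w (k : ℕ) (f k) :=
      Finset.prod_nonneg fun k _ => hwnn _ _
    have hsq : A ^ 2 ≤ (∑ k : Fin n, ((f k : ℝ) - M (k : ℕ))) ^ 2 := by
      have := hf
      rw [hBad] at this
      calc A ^ 2 ≤ |∑ k : Fin n, ((f k : ℝ) - M (k : ℕ))| ^ 2 := by
            apply pow_le_pow_left₀ hA.le this
        _ = _ := sq_abs _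
    rw [le_div_iff₀ (by positivity : (0:ℝ) < A ^ 2)]
    calc (∏ k : Fin n, w (k : ℕ) (f k)) * A ^ 2
        ≤ (∏ k : Fin n, w (k : ℕ) (f k)) * (∑ k : Fin n, ((f k : ℝ) - M (k : ℕ))) ^ 2 :=
          mul_le_mul_of_nonneg_left hsq hprod
      _ = _ := by ring
  -- sum up
  obtain ⟨-, -, hT2⟩ := tuple_moments n (fun k => w (k : ℕ)) (fun k => M (k : ℕ))
    (fun k => V (k : ℕ)) (fun k => h0 _) (fun k => h1 _) (fun k => h2 _)
  calc μ {ω | A ≤ |∑ k ∈ Finset.range n, ((G (k + 1) ω : ℝ) - M k)|}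
      ≤ μ (⋃ f : Bad, C f) := measure_mono hincl
    _ ≤ ∑' f : Bad, μ (C f) := measure_iUnion_le _
    _ ≤ ∑' f : Bad, ENNReal.ofReal ((∑ k : Fin n, (((f : Fin n → ℕ) k : ℝ) - M (k : ℕ))) ^ 2
          * (∏ k : Fin n, w (k : ℕ) ((f : Fin n → ℕ) k)) / A ^ 2) :=
        ENNReal.tsum_le_tsum fun f => hptb f f.2
    _ ≤ ∑' f : Fin n → ℕ, ENNReal.ofReal ((∑ k : Fin n, ((f k : ℝ) - M (k : ℕ))) ^ 2
          * (∏ k : Fin n, w (k : ℕ) (f k)) / A ^ 2) :=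
        ENNReal.tsum_comp_le_tsum_of_injective Subtype.val_injective _
    _ = ENNReal.ofReal ((∑ k ∈ Finset.range n, V k) / A ^ 2) := by
        rw [← ENNReal.ofReal_tsum_of_nonneg]
        · congr 1
          rw [((hT2.div_const (A ^ 2)).tsum_eq :)]
          rw [Fin.sum_univ_eq_sum_range (fun k => V k) n]
        · intro f
          have hprod : 0 ≤ ∏ k : Fin n, w (k : ℕ) (f k) :=
            Finset.prod_nonneg fun k _ => hwnn _ _
          positivity
        · exact (hT2.div_const (A ^ 2)).summable

noncomputable def Hn (n : ℕ) : ℝ := ∑ k ∈ Finset.range n, 1 / ((k : ℝ) + 1)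

lemma Hn_mono : Monotone Hn := by
  intro a b hab
  exact Finset.sum_le_sum_of_subset_of_nonneg (Finset.range_subset_range.2 hab)
    (fun k _ _ => by positivity)

lemma Hn_one : Hn 1 = 1 := by simp [Hn]

lemma Hn_pos {n : ℕ} (hn : 1 ≤ n) : 1 ≤ Hn n := Hn_one ▸ Hn_mono hn

lemma Hn_nonneg (n : ℕ) : 0 ≤ Hn n := Finset.sum_nonneg fun k _ => by positivity

lemma Hn_diff_le {a b : ℕ} (hab : a ≤ b) :
    Hn (2 ^ b) ≤ Hn (2 ^ a) + ((b : ℝ) - a) := by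
  induction b with
  | zero => interval_cases a; simp
  | succ b ih =>
    rcases Nat.lt_or_ge a (b + 1) with h | h
    · have hab' : a ≤ b := by omega
      have step : Hn (2 ^ (b + 1)) ≤ Hn (2 ^ b) + 1 := by
        have hsub : Hn (2 ^ (b+1)) - Hn (2 ^ b) =
            ∑ k ∈ Finset.Ico ((2:ℕ) ^ b) (2 ^ (b+1)), 1 / ((k : ℝ) + 1) := by
          rw [Finset.sum_Ico_eq_sub _ (Nat.pow_le_pow_right (by norm_num) (by omega))]
          rfl
        have hle : ∑ k ∈ Finset.Ico ((2:ℕ) ^ b) (2 ^ (b+1)), 1 / ((k : ℝ) + 1) ≤ 1 := by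
          calc ∑ k ∈ Finset.Ico ((2:ℕ) ^ b) (2 ^ (b+1)), 1 / ((k : ℝ) + 1)
              ≤ (Finset.Ico ((2:ℕ) ^ b) (2 ^ (b+1))).card • (1 / (2 ^ b : ℝ)) := by
                apply Finset.sum_le_card_nsmul
                intro k hk
                rw [Finset.mem_Ico] at hk
                rw [div_le_div_iff₀ (by positivity) (by positivity)]
                have : (2 ^ b : ℝ) ≤ (k : ℝ) + 1 := by
                  have := hk.1
                  have : (2 ^ b : ℝ) ≤ (k : ℝ) := by exact_mod_cast Nat.cast_le.2 this
                  linarith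
                linarith
            _ = 1 := by
                rw [Nat.card_Ico, nsmul_eq_mul]
                have h2 : 2 ^ (b+1) - 2 ^ b = 2 ^ b := by
                  rw [pow_succ]; omega
                rw [h2]
                push_cast
                field_simp
        linarith [hsub ▸ hle]
      calc Hn (2 ^ (b + 1)) ≤ Hn (2 ^ b) + 1 := step
        _ ≤ Hn (2 ^ a) + ((b : ℝ) - a) + 1 := by linarith [ih hab']
        _ = Hn (2 ^ a) + (((b + 1 : ℕ) : ℝ) - a) := by push_cast; ring
    · have : a = b + 1 := by omega
      subst this
      simp

lemma Hn_pow_ge (a : ℕ) : 1 + (a : ℝ) / 2 ≤ Hn (2 ^ a) := by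
  induction a with
  | zero => simp [Hn_one]
  | succ a ih =>
    have step : Hn (2 ^ a) + 1 / 2 ≤ Hn (2 ^ (a + 1)) := by
      have hsub : Hn (2 ^ (a+1)) - Hn (2 ^ a) =
          ∑ k ∈ Finset.Ico ((2:ℕ) ^ a) (2 ^ (a+1)), 1 / ((k : ℝ) + 1) := by
        rw [Finset.sum_Ico_eq_sub _ (Nat.pow_le_pow_right (by norm_num) (by omega))]
        rfl
      have hge : (1:ℝ) / 2 ≤ ∑ k ∈ Finset.Ico ((2:ℕ) ^ a) (2 ^ (a+1)), 1 / ((k : ℝ) + 1) := by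
        calc (1:ℝ)/2 = (Finset.Ico ((2:ℕ) ^ a) (2 ^ (a+1))).card • (1 / (2 ^ (a+1) : ℝ)) := by
              rw [Nat.card_Ico, nsmul_eq_mul]
              have h2 : 2 ^ (a+1) - 2 ^ a = 2 ^ a := by rw [pow_succ]; omega
              rw [h2]
              push_cast
              rw [pow_succ]
              field_simp
          _ ≤ _ := by
              apply Finset.card_nsmul_le_sum
              intro k hk
              rw [Finset.mem_Ico] at hk
              rw [div_le_div_iff₀ (by positivity) (by positivity)]
              have hk2 : (k : ℝ) + 1 ≤ 2 ^ (a+1) := by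
                have : k + 1 ≤ 2 ^ (a+1) := hk.2
                exact_mod_cast Nat.cast_le.2 this
              linarith
      linarith [hsub ▸ hge]
    have : (1:ℝ) + (↑(a+1)) / 2 = (1 + (a:ℝ)/2) + 1/2 := by push_cast; ring
    rw [this]
    linarith

def Nseq (j : ℕ) : ℕ := 2 ^ (j ^ 2)

lemma Nseq_one_le (j : ℕ) : 1 ≤ Nseq j := Nat.one_le_two_pow

lemma Nseq_gt (j : ℕ) : j < Nseq j :=
  lt_of_lt_of_le Nat.lt_two_pow_self (Nat.pow_le_pow_right (by norm_num) (Nat.le_self_pow (by norm_num) j))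

lemma ratio_tendsto :
    Tendsto (fun j : ℕ => Hn (Nseq (j + 1)) / Hn (Nseq j)) atTop (nhds 1) := by
  have hub : ∀ j : ℕ, Hn (Nseq (j + 1)) / Hn (Nseq j) ≤ 1 + (2 * (j:ℝ) + 1) / (1 + (j:ℝ)^2/2) := by
    intro j
    have hpos : (1:ℝ) ≤ Hn (Nseq j) := Hn_pos (Nseq_one_le j)
    have hge : 1 + ((j:ℝ)^2) / 2 ≤ Hn (Nseq j) := by
      have := Hn_pow_ge (j ^ 2); push_cast at this ⊢; exact this
    have hdiff : Hn (Nseq (j+1)) ≤ Hn (Nseq j) + (2 * (j:ℝ) + 1) := by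
      have := Hn_diff_le (a := j ^ 2) (b := (j+1) ^ 2) (Nat.pow_le_pow_left (Nat.le_succ j) 2)
      have h2 : (((j+1)^2 : ℕ) : ℝ) - ((j^2 : ℕ) : ℝ) = 2 * (j:ℝ) + 1 := by push_cast; ring
      rw [h2] at this
      exact this
    rw [div_le_iff₀ (by linarith)]
    have h1 : (1 + (2 * (j:ℝ) + 1) / (1 + (j:ℝ)^2/2)) * Hn (Nseq j)
        = Hn (Nseq j) + ((2 * (j:ℝ) + 1) / (1 + (j:ℝ)^2/2)) * Hn (Nseq j) := by ring
    rw [h1]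
    have h2 : 2 * (j:ℝ) + 1 ≤ ((2 * (j:ℝ) + 1) / (1 + (j:ℝ)^2/2)) * Hn (Nseq j) := by
      rw [div_mul_eq_mul_div, le_div_iff₀ (by positivity)]
      have : (0:ℝ) ≤ 2 * (j:ℝ) + 1 := by positivity
      nlinarith
    linarith
  have hlb : ∀ j : ℕ, (1:ℝ) ≤ Hn (Nseq (j + 1)) / Hn (Nseq j) := by
    intro j
    have hpos : (1:ℝ) ≤ Hn (Nseq j) := Hn_pos (Nseq_one_le j)
    rw [le_div_iff₀ (by linarith), one_mul]
    exact Hn_mono (Nat.pow_le_pow_right (by norm_num) (Nat.pow_le_pow_left (Nat.le_succ j) 2))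
  have hub_tendsto : Tendsto (fun j : ℕ => 1 + (2 * (j:ℝ) + 1) / (1 + (j:ℝ)^2/2)) atTop (nhds 1) := by
    have hz : Tendsto (fun j : ℕ => (2 * (j:ℝ) + 1) / (1 + (j:ℝ)^2/2)) atTop (nhds 0) := by
      apply tendsto_of_tendsto_of_tendsto_of_le_of_le' tendsto_const_nhds
        (tendsto_const_div_atTop_nhds_zero_nat 6)
      · exact Eventually.of_forall fun j => by positivity
      · filter_upwards [eventually_ge_atTop 1] with j hj
        have hj1 : (1:ℝ) ≤ (j:ℝ) := by exact_mod_cast hj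
        rw [div_le_div_iff₀ (by positivity) (by positivity)]
        nlinarith
    have := hz.const_add 1
    simpa using this
  exact tendsto_of_tendsto_of_tendsto_of_le_of_le tendsto_const_nhds hub_tendsto hlb hub

lemma det_interpolation {S : ℕ → ℝ} (hSmono : Monotone S) (hSnn : ∀ n, 0 ≤ S n)
    {θ : ℝ} (hθ : 0 < θ)
    (h1 : Tendsto (fun j => S (Nseq j) / (θ * Hn (Nseq j))) atTop (nhds 1)) :
    Tendsto (fun n => S n / (θ * Hn n)) atTop (nhds 1) := by
  classical
  set jn : ℕ → ℕ := fun n => Nat.findGreatest (fun j => Nseq j ≤ n) n with hjn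
  have hNle : ∀ n, 1 ≤ n → Nseq (jn n) ≤ n := by
    intro n hn
    have h0 : (fun j => Nseq j ≤ n) 0 := by simpa [Nseq] using hn
    exact Nat.findGreatest_spec (P := fun j => Nseq j ≤ n) (m := 0) (Nat.zero_le n) h0
  have hNgt : ∀ n, 1 ≤ n → n < Nseq (jn n + 1) := by
    intro n hn
    by_contra h
    push_neg at h
    have hle : jn n + 1 ≤ n := le_trans (Nseq_gt (jn n + 1)).le h
    exact Nat.findGreatest_is_greatest (lt_add_one _) hle h
  have hjn_tendsto : Tendsto jn atTop atTop := by
    rw [tendsto_atTop_atTop]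
    intro b
    refine ⟨max (Nseq b) b, fun n hn => ?_⟩
    exact Nat.le_findGreatest (le_trans (le_max_right _ _) hn)
      (le_trans (le_max_left _ _) hn)
  have hHpos : ∀ m : ℕ, 1 ≤ m → 0 < θ * Hn m := fun m hm =>
    mul_pos hθ (lt_of_lt_of_le one_pos (Hn_pos hm))
  -- upper and lower comparison sequences
  set U : ℕ → ℝ := fun j => (S (Nseq (j+1)) / (θ * Hn (Nseq (j+1)))) * (Hn (Nseq (j+1)) / Hn (Nseq j)) with hU
  set L : ℕ → ℝ := fun j => (S (Nseq j) / (θ * Hn (Nseq j))) * (Hn (Nseq j) / Hn (Nseq (j+1))) with hL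
  have hUt : Tendsto U atTop (nhds 1) := by
    have := (h1.comp (tendsto_add_atTop_nat 1)).mul ratio_tendsto
    simpa using this
  have hLt : Tendsto L atTop (nhds 1) := by
    have hinv : Tendsto (fun j : ℕ => Hn (Nseq j) / Hn (Nseq (j+1))) atTop (nhds 1) := by
      have h := (ratio_tendsto).inv₀ one_ne_zero
      rw [inv_one] at h
      exact h.congr fun j => inv_div _ _
    have := h1.mul hinv
    simpa using this
  apply tendsto_of_tendsto_of_tendsto_of_le_of_le' (hLt.comp hjn_tendsto) (hUt.comp hjn_tendsto)
  · filter_upwards [eventually_ge_atTop 1] with n hn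
    have hj := hNle n hn
    have hj' := hNgt n hn
    have h1p : (1:ℝ) ≤ Hn (Nseq (jn n)) := Hn_pos (Nseq_one_le _)
    have h2p : (1:ℝ) ≤ Hn (Nseq (jn n + 1)) := Hn_pos (Nseq_one_le _)
    have hLeq : L (jn n) = S (Nseq (jn n)) / (θ * Hn (Nseq (jn n + 1))) := by
      rw [hL]
      field_simp
    rw [Function.comp_apply, hLeq]
    apply div_le_div₀ (hSnn n) (hSmono hj) (hHpos n hn)
    have : Hn n ≤ Hn (Nseq (jn n + 1)) := Hn_mono hj'.le
    nlinarith
  · filter_upwards [eventually_ge_atTop 1] with n hn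
    have hj := hNle n hn
    have hj' := hNgt n hn
    have h1p : (1:ℝ) ≤ Hn (Nseq (jn n)) := Hn_pos (Nseq_one_le _)
    have h2p : (1:ℝ) ≤ Hn (Nseq (jn n + 1)) := Hn_pos (Nseq_one_le _)
    have hUeq : U (jn n) = S (Nseq (jn n + 1)) / (θ * Hn (Nseq (jn n))) := by
      rw [hU]
      field_simp
    rw [Function.comp_apply, hUeq]
    apply div_le_div₀ (hSnn _) (hSmono hj'.le) (hHpos _ (Nseq_one_le _))
    have : Hn (Nseq (jn n)) ≤ Hn n := Hn_mono hj
    nlinarith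


/-- Law of Large Numbers for the number of segregating sites: if `(G_k)_{k ≥ 1}` are
independent, `G_k` geometric on `ℕ` with success probability `k/(k+θ)`, and
`S_n = ∑_{k=1}^{n-1} G_k`, then `S_n/(θ H_{n-1}) → 1` almost surely. -/
theorem segregating_sites_lln {Ω : Type*} [MeasurableSpace Ω] (μ : Measure Ω)
    [IsProbabilityMeasure μ] (θ : ℝ) (hθ : 0 < θ)
    (G : ℕ → Ω → ℕ)
    (hindep : iIndepFun (fun k => G (k + 1)) μ)
    (hgeom : ∀ k : ℕ, 1 ≤ k → ∀ m : ℕ,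
      μ {ω | G k ω = m} = ENNReal.ofReal ((k / (k + θ)) * (θ / (k + θ)) ^ m)) :
    ∀ᵐ ω ∂μ, Tendsto
      (fun n : ℕ => ((∑ k ∈ Finset.Icc 1 (n - 1), G k ω : ℕ) : ℝ)
        / (θ * ∑ k ∈ Finset.Icc 1 (n - 1), 1 / (k : ℝ)))
      atTop (nhds 1) := by
  classical
  have hKpos : ∀ k : ℕ, (0:ℝ) < (k:ℝ) + 1 := fun k => by positivity
  have hKθ : ∀ k : ℕ, (0:ℝ) < ((k:ℝ)+1) + θ := fun k => by positivity
  have hpnn : ∀ k : ℕ, (0:ℝ) ≤ θ / (((k:ℝ)+1) + θ) := fun k => by positivity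
  have hqpos : ∀ k : ℕ, (0:ℝ) < ((k:ℝ)+1) / (((k:ℝ)+1) + θ) := fun k =>
    div_pos (hKpos k) (hKθ k)
  have hsum1 : ∀ k : ℕ, θ / (((k:ℝ)+1) + θ) + ((k:ℝ)+1) / (((k:ℝ)+1) + θ) = 1 := fun k => by
    have := (hKθ k).ne'
    field_simp
    ring
  -- the pmf, mean, and variance data
  set w : ℕ → ℕ → ℝ := fun k a =>
    (((k:ℝ)+1) / (((k:ℝ)+1) + θ)) * (θ / (((k:ℝ)+1) + θ)) ^ a with hwdef
  set M : ℕ → ℝ := fun k => θ / ((k:ℝ)+1) with hMdef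
  set V : ℕ → ℝ := fun k => θ * ((((k:ℝ)+1) + θ)) / ((k:ℝ)+1) ^ 2 with hVdef
  have hMeq : ∀ k : ℕ, (θ / (((k:ℝ)+1) + θ)) / (((k:ℝ)+1) / (((k:ℝ)+1) + θ)) = M k := by
    intro k
    have hh1 := (hKpos k).ne'
    have hh2 := (hKθ k).ne'
    rw [hMdef]
    field_simp
  have hVeq : ∀ k : ℕ,
      (θ / (((k:ℝ)+1) + θ)) / (((k:ℝ)+1) / (((k:ℝ)+1) + θ)) ^ 2 = V k := by
    intro k
    rw [hVdef]
    have h1 := (hKpos k).ne'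
    have h2 := (hKθ k).ne'
    field_simp
  have h0 : ∀ k, HasSum (w k) 1 := fun k => geom0 (hpnn k) (hqpos k) (hsum1 k)
  have h1 : ∀ k, HasSum (fun a : ℕ => ((a : ℝ) - M k) * w k a) 0 := by
    intro k
    have := geom1 (hpnn k) (hqpos k) (hsum1 k)
    rw [hMeq k] at this
    exact this
  have h2 : ∀ k, HasSum (fun a : ℕ => ((a : ℝ) - M k) ^ 2 * w k a) (V k) := by
    intro k
    have := geom2 (hpnn k) (hqpos k) (hsum1 k)
    rw [hMeq k, hVeq k] at this
    exact this
  have hwnn : ∀ k a, 0 ≤ w k a := fun k a =>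
    mul_nonneg (hqpos k).le (pow_nonneg (hpnn k) a)
  have hw : ∀ k a, μ {ω | G (k + 1) ω = a} = ENNReal.ofReal (w k a) := by
    intro k a
    rw [hgeom (k + 1) (Nat.le_add_left 1 k) a]
    congr 1
    rw [hwdef]
    push_cast
    ring
  have cheb := chebyshev_pmf μ G hindep w M V hw hwnn h0 h1 h2
  -- mean and variance sums
  have hMsum : ∀ n : ℕ, ∑ k ∈ Finset.range n, M k = θ * Hn n := by
    intro n
    rw [Hn, Finset.mul_sum]
    refine Finset.sum_congr rfl fun k _ => ?_
    rw [hMdef]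
    ring
  have hVsum : ∀ n : ℕ, ∑ k ∈ Finset.range n, V k ≤ θ * (1 + θ) * Hn n := by
    intro n
    rw [Hn, Finset.mul_sum]
    refine Finset.sum_le_sum fun k _ => ?_
    rw [hVdef]
    have h1 := hKpos k
    have hk1 : (1:ℝ) ≤ (k:ℝ) + 1 := by
      have : (0:ℝ) ≤ (k:ℝ) := Nat.cast_nonneg k
      linarith
    rw [div_le_iff₀ (by positivity)]
    have key : ((k:ℝ)+1) + θ ≤ (1 + θ) * ((k:ℝ)+1) := by nlinarith
    calc θ * (((k:ℝ)+1) + θ) ≤ θ * ((1 + θ) * ((k:ℝ)+1)) := by nlinarith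
      _ = θ * (1 + θ) * (1 / ((k:ℝ)+1)) * ((k:ℝ)+1) ^ 2 := by field_simp
  -- Borel–Cantelli events
  set E : ℕ → ℕ → Set Ω := fun m j =>
    {ω | θ * Hn (Nseq j) / ((m:ℝ)+1) ≤
      |∑ k ∈ Finset.range (Nseq j), ((G (k + 1) ω : ℝ) - M k)|} with hEdef
  have hEbound : ∀ m j : ℕ, μ (E m j) ≤
      ENNReal.ofReal (((1 + θ) * ((m:ℝ)+1) ^ 2 / θ) * (1 / (1 + (j:ℝ)^2/2))) := by
    intro m j
    have hHj1 : (1:ℝ) ≤ Hn (Nseq j) := Hn_pos (Nseq_one_le j)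
    have hHjge : 1 + (j:ℝ)^2/2 ≤ Hn (Nseq j) := by
      have := Hn_pow_ge (j ^ 2)
      push_cast at this ⊢
      exact this
    have hApos : 0 < θ * Hn (Nseq j) / ((m:ℝ)+1) := by positivity
    refine le_trans (cheb (Nseq j) _ hApos) (ENNReal.ofReal_le_ofReal ?_)
    rw [mul_one_div, div_le_div_iff₀ (by positivity) (by positivity)]
    have hVle := hVsum (Nseq j)
    have hA2 : (θ * Hn (Nseq j) / ((m:ℝ)+1)) ^ 2
        = θ^2 * Hn (Nseq j)^2 / ((m:ℝ)+1)^2 := by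
      rw [div_pow]
      ring_nf
    rw [hA2]
    have hgoal : (1 + θ) * ((m:ℝ)+1) ^ 2 / θ * (θ^2 * Hn (Nseq j)^2 / ((m:ℝ)+1)^2)
        = θ * (1 + θ) * Hn (Nseq j)^2 := by
      field_simp
    calc (∑ k ∈ Finset.range (Nseq j), V k) * (1 + (j:ℝ)^2/2)
        ≤ (θ * (1 + θ) * Hn (Nseq j)) * Hn (Nseq j) := by
          have hnn : (0:ℝ) ≤ ∑ k ∈ Finset.range (Nseq j), V k :=
            Finset.sum_nonneg fun k _ => by rw [hVdef]; positivity
          have h1 : (∑ k ∈ Finset.range (Nseq j), V k) * (1 + (j:ℝ)^2/2)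
              ≤ (∑ k ∈ Finset.range (Nseq j), V k) * Hn (Nseq j) :=
            mul_le_mul_of_nonneg_left hHjge hnn
          have h2 : (∑ k ∈ Finset.range (Nseq j), V k) * Hn (Nseq j)
              ≤ (θ * (1 + θ) * Hn (Nseq j)) * Hn (Nseq j) :=
            mul_le_mul_of_nonneg_right hVle (by linarith)
          linarith
      _ ≤ (1 + θ) * ((m:ℝ)+1) ^ 2 / θ * (θ^2 * Hn (Nseq j)^2 / ((m:ℝ)+1)^2) := by
          rw [hgoal]
          ring_nf
          exact le_refl _
    -- done
  have hsummable : ∀ m : ℕ, (∑' j : ℕ, μ (E m j)) ≠ ⊤ := by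
    intro m
    have hS : Summable (fun j : ℕ =>
        ((1 + θ) * ((m:ℝ)+1) ^ 2 / θ) * (1 / (1 + (j:ℝ)^2/2))) := by
      apply Summable.mul_left
      rw [← summable_nat_add_iff 1]
      have hbase : Summable (fun j : ℕ => 2 * (1 / ((j:ℝ)+1) ^ 2)) := by
        apply Summable.mul_left
        have := Real.summable_one_div_nat_pow.2 (show 1 < 2 by norm_num)
        rw [← summable_nat_add_iff 1] at this
        exact_mod_cast this
      apply Summable.of_nonneg_of_le (fun j => by positivity) _ hbase
      intro j
      rw [mul_one_div, div_le_div_iff₀ (by positivity) (by positivity)]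
      push_cast
      nlinarith [sq_nonneg ((j:ℝ)+1)]
    have hlt : (∑' j : ℕ, μ (E m j)) < ⊤ :=
      calc (∑' j : ℕ, μ (E m j))
          ≤ ∑' j : ℕ, ENNReal.ofReal (((1 + θ) * ((m:ℝ)+1) ^ 2 / θ) * (1 / (1 + (j:ℝ)^2/2))) :=
            ENNReal.tsum_le_tsum (hEbound m)
        _ = ENNReal.ofReal (∑' j : ℕ,
              ((1 + θ) * ((m:ℝ)+1) ^ 2 / θ) * (1 / (1 + (j:ℝ)^2/2))) :=
            (ENNReal.ofReal_tsum_of_nonneg (fun j => by positivity) hS).symm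
        _ < ⊤ := ENNReal.ofReal_lt_top
    exact hlt.ne
  have hae : ∀ᵐ ω ∂μ, ∀ m : ℕ, ∀ᶠ j in atTop, ω ∉ E m j :=
    (ae_all_iff).2 fun m => ae_eventually_notMem (hsummable m)
  filter_upwards [hae] with ω hω
  -- per-ω argument
  set S : ℕ → ℝ := fun n => ((∑ k ∈ Finset.range n, G (k + 1) ω : ℕ) : ℝ) with hSdef
  have hSmono : Monotone S := by
    intro a b hab
    rw [hSdef]
    exact_mod_cast Nat.cast_le.2 (Finset.sum_le_sum_of_subset (Finset.range_subset_range.2 hab))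
  have hSnn : ∀ n, 0 ≤ S n := fun n => by rw [hSdef]; positivity
  have hSsub : ∀ n : ℕ, ∑ k ∈ Finset.range n, ((G (k + 1) ω : ℝ) - M k)
      = S n - θ * Hn n := by
    intro n
    rw [Finset.sum_sub_distrib, hMsum n, hSdef]
    push_cast
    ring
  -- convergence along the subsequence
  have hsub : Tendsto (fun j => S (Nseq j) / (θ * Hn (Nseq j))) atTop (nhds 1) := by
    rw [Metric.tendsto_atTop]
    intro ε hε
    obtain ⟨m, hm⟩ := exists_nat_one_div_lt hε
    obtain ⟨J, hJ⟩ := (eventually_atTop).1 (hω m)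
    refine ⟨J, fun j hj => ?_⟩
    have hnot := hJ j hj
    rw [hEdef] at hnot
    simp only [Set.mem_setOf_eq, not_le] at hnot
    rw [hSsub (Nseq j)] at hnot
    have hHj1 : (1:ℝ) ≤ Hn (Nseq j) := Hn_pos (Nseq_one_le j)
    have hden : 0 < θ * Hn (Nseq j) := by positivity
    rw [Real.dist_eq]
    have heq : S (Nseq j) / (θ * Hn (Nseq j)) - 1
        = (S (Nseq j) - θ * Hn (Nseq j)) / (θ * Hn (Nseq j)) := by
      field_simp
    rw [heq, abs_div, abs_of_pos hden, div_lt_iff₀ hden]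
    calc |S (Nseq j) - θ * Hn (Nseq j)| < θ * Hn (Nseq j) / ((m:ℝ)+1) := hnot
      _ ≤ ε * (θ * Hn (Nseq j)) := by
          rw [div_le_iff₀ (by positivity : (0:ℝ) < (m:ℝ)+1)]
          have h2 : (0:ℝ) < (m:ℝ)+1 := by positivity
          have h3 : 1 < ε * ((m:ℝ)+1) := by
            rw [div_lt_iff₀ h2] at hm
            linarith
          nlinarith [mul_le_mul_of_nonneg_left h3.le hden.le]
  -- interpolation
  have hfull := det_interpolation hSmono hSnn hθ hsub
  -- transfer to the statement's indexing
  have hcomp := hfull.comp (tendsto_sub_atTop_nat 1)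
  refine hcomp.congr fun n => ?_
  simp only [Function.comp_apply]
  congr 1
  · rw [hSdef]
    norm_cast
    rw [← Finset.Ico_add_one_right_eq_Icc, Finset.sum_Ico_eq_sum_range]
    refine congrArg _ ?_
    simp only [Nat.add_sub_cancel]
    exact Finset.sum_congr rfl fun i _ => by rw [Nat.add_comm]
  · rw [Hn]
    congr 1
    rw [← Finset.Ico_add_one_right_eq_Icc, Finset.sum_Ico_eq_sum_range]
    simp only [Nat.add_sub_cancel]
    refine Finset.sum_congr rfl fun i _ => ?_
    push_cast
    rw [add_comm]
end

section
/- Let θ > 0 and fix an integer i ≥ 3. Then, as n → ∞, (∑_{b=1}^{i} S(i, b) (b-1)! θ^b H_{n-1}^{(b)}) / (θ H_{n-1} + θ² H_{n-1}^{(2)})^{i/2} → 0; i.e., the i-th cumulant of the standardized number of segregating sites, (∑_{b=1}^{i} S(i,b)(b-1)! θ^b H_{n-1}^{(b)}) / (Var S_n)^{i/2}, tends to 0. Moreover this quantity is asymptotically equal to θ^{1-i/2} / (log n)^{(i-2)/2}. -/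
open Filter

lemma stirling2_succ_one (n : ℕ) : stirling2 (n + 1) 1 = 1 := by
  induction n with
  | zero => rfl
  | succ m ih =>
    show 1 * stirling2 (m + 1) 1 + stirling2 (m + 1) 0 = 1
    rw [ih]; rfl

lemma hlog : Tendsto (fun n : ℕ => Real.log n) atTop atTop :=
  Real.tendsto_log_atTop.comp tendsto_natCast_atTop_atTop

lemma harmonic_cast (n : ℕ) :
    ((harmonic n : ℚ) : ℝ) = ∑ k ∈ Finset.Icc 1 n, 1 / (k : ℝ) := by
  rw [harmonic_eq_sum_Icc]
  push_cast
  simp [one_div]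

/-- harmonic sum of `n-1` over log n tends to 1 -/
lemma harmonic_div_log :
    Tendsto (fun n : ℕ => (∑ k ∈ Finset.Icc 1 (n - 1), 1 / (k : ℝ)) / Real.log n)
      atTop (nhds 1) := by
  have hinv : Tendsto (fun n : ℕ => 1 + 1 / Real.log n) atTop (nhds (1 + 0)) := by
    have h0 : Tendsto (fun n : ℕ => (Real.log n)⁻¹) atTop (nhds 0) := by
      have := hlog.inv_tendsto_atTop
      exact this
    simpa [one_div] using (tendsto_const_nhds (x := (1:ℝ))).add h0
  rw [show (1 : ℝ) + 0 = 1 by norm_num] at hinv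
  refine tendsto_of_tendsto_of_tendsto_of_le_of_le' tendsto_const_nhds hinv ?_ ?_
  · filter_upwards [eventually_ge_atTop 3] with n hn
    have hlogpos : 0 < Real.log n := Real.log_pos (by exact_mod_cast by omega)
    rw [le_div_iff₀ hlogpos, one_mul]
    have h2 := log_add_one_le_harmonic (n - 1)
    rw [show (n - 1) + 1 = n by omega] at h2
    rw [← harmonic_cast]
    exact h2
  · filter_upwards [eventually_ge_atTop 3] with n hn
    have hlogpos : 0 < Real.log n := Real.log_pos (by exact_mod_cast by omega)
    rw [div_le_iff₀ hlogpos, add_mul, one_mul, div_mul_cancel₀ _ hlogpos.ne']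
    rw [← harmonic_cast]
    calc ((harmonic (n-1) : ℚ) : ℝ) ≤ 1 + Real.log (n - 1 : ℕ) := harmonic_le_one_add_log _
      _ ≤ Real.log n + 1 := by
          rw [add_comm]
          gcongr
          · exact_mod_cast Nat.one_le_iff_ne_zero.mpr (by omega)
          · exact_mod_cast by omega

/-- sums of 1/k^b are uniformly bounded for b ≥ 2 -/
lemma sum_pow_bounded (b : ℕ) (hb : 2 ≤ b) (n : ℕ) :
    ∑ k ∈ Finset.Icc 1 n, 1 / (k : ℝ) ^ b ≤ ∑' k : ℕ, 1 / (k : ℝ) ^ 2 := by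
  have hsum : Summable (fun k : ℕ => 1 / (k : ℝ) ^ 2) :=
    Real.summable_one_div_nat_pow.mpr one_lt_two
  calc ∑ k ∈ Finset.Icc 1 n, 1 / (k : ℝ) ^ b
      ≤ ∑ k ∈ Finset.Icc 1 n, 1 / (k : ℝ) ^ 2 := by
        refine Finset.sum_le_sum fun k hk => ?_
        have hk1 : 1 ≤ k := (Finset.mem_Icc.mp hk).1
        apply one_div_le_one_div_of_le (by positivity)
        exact pow_le_pow_right₀ (by exact_mod_cast hk1) hb
    _ ≤ ∑' k : ℕ, 1 / (k : ℝ) ^ 2 :=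
        Summable.sum_le_tsum _ (fun k _ => by positivity) hsum

lemma sum_pow_div_log (b : ℕ) (hb : 2 ≤ b) :
    Tendsto (fun n : ℕ => (∑ k ∈ Finset.Icc 1 (n - 1), 1 / (k : ℝ) ^ b) / Real.log n)
      atTop (nhds 0) := by
  have hB : Tendsto (fun n : ℕ => (∑' k : ℕ, 1 / (k : ℝ) ^ 2) / Real.log n) atTop (nhds 0) :=
    tendsto_const_nhds.div_atTop hlog
  refine squeeze_zero' ?_ ?_ hB
  · filter_upwards [eventually_ge_atTop 3] with n hn
    have hlogpos : 0 < Real.log n := Real.log_pos (by exact_mod_cast by omega)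
    positivity
  · filter_upwards [eventually_ge_atTop 3] with n hn
    have hlogpos : 0 < Real.log n := Real.log_pos (by exact_mod_cast by omega)
    exact (div_le_div_iff_of_pos_right hlogpos).mpr (sum_pow_bounded b hb _)

/-- For `θ > 0` and fixed `i ≥ 3`, the `i`-th cumulant of the standardized number of
segregating sites, `(∑_{b=1}^i S(i,b)(b-1)! θ^b H_{n-1}^{(b)})/(θ H_{n-1} + θ² H_{n-1}^{(2)})^{i/2}`,
tends to `0` as `n → ∞`, and is asymptotically equal to `θ^{1-i/2}/(log n)^{(i-2)/2}`. -/
theorem standardized_cumulant_asymptotics (θ : ℝ) (hθ : 0 < θ) (i : ℕ) (hi : 3 ≤ i) :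
    Tendsto
      (fun n : ℕ =>
        (∑ b ∈ Finset.Icc 1 i, (stirling2 i b : ℝ) * Nat.factorial (b - 1) * θ ^ b
            * ∑ k ∈ Finset.Icc 1 (n - 1), 1 / (k : ℝ) ^ b)
          / (θ * (∑ k ∈ Finset.Icc 1 (n - 1), 1 / (k : ℝ))
              + θ ^ 2 * ∑ k ∈ Finset.Icc 1 (n - 1), 1 / (k : ℝ) ^ 2) ^ ((i : ℝ) / 2))
      atTop (nhds 0)
    ∧ Tendsto
      (fun n : ℕ =>
        ((∑ b ∈ Finset.Icc 1 i, (stirling2 i b : ℝ) * Nat.factorial (b - 1) * θ ^ b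
            * ∑ k ∈ Finset.Icc 1 (n - 1), 1 / (k : ℝ) ^ b)
          / (θ * (∑ k ∈ Finset.Icc 1 (n - 1), 1 / (k : ℝ))
              + θ ^ 2 * ∑ k ∈ Finset.Icc 1 (n - 1), 1 / (k : ℝ) ^ 2) ^ ((i : ℝ) / 2))
          / (θ ^ (1 - (i : ℝ) / 2) / Real.log n ^ (((i : ℝ) - 2) / 2)))
      atTop (nhds 1) := by
  have hp1 : (1 : ℝ) < (i : ℝ) / 2 := by
    have : (3 : ℝ) ≤ (i : ℝ) := by exact_mod_cast hi
    linarith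
  set p : ℝ := (i : ℝ) / 2 with hp
  -- numerator asymptotics
  have hNum : Tendsto (fun n : ℕ =>
      (∑ b ∈ Finset.Icc 1 i, (stirling2 i b : ℝ) * Nat.factorial (b - 1) * θ ^ b
        * ∑ k ∈ Finset.Icc 1 (n - 1), 1 / (k : ℝ) ^ b) / Real.log n) atTop (nhds θ) := by
    have key : ∀ n : ℕ,
        (∑ b ∈ Finset.Icc 1 i, (stirling2 i b : ℝ) * Nat.factorial (b - 1) * θ ^ b
          * ∑ k ∈ Finset.Icc 1 (n - 1), 1 / (k : ℝ) ^ b) / Real.log n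
        = ∑ b ∈ Finset.Icc 1 i, (stirling2 i b : ℝ) * Nat.factorial (b - 1) * θ ^ b
          * ((∑ k ∈ Finset.Icc 1 (n - 1), 1 / (k : ℝ) ^ b) / Real.log n) := by
      intro n
      rw [Finset.sum_div]
      exact Finset.sum_congr rfl fun b _ => by ring
    simp only [key]
    have hlim : Tendsto (fun n : ℕ =>
        ∑ b ∈ Finset.Icc 1 i, (stirling2 i b : ℝ) * Nat.factorial (b - 1) * θ ^ b
          * ((∑ k ∈ Finset.Icc 1 (n - 1), 1 / (k : ℝ) ^ b) / Real.log n)) atTop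
        (nhds (∑ b ∈ Finset.Icc 1 i,
          if b = 1 then (stirling2 i b : ℝ) * Nat.factorial (b - 1) * θ ^ b else 0)) := by
      refine tendsto_finset_sum _ fun b hb => ?_
      rcases eq_or_ne b 1 with rfl | hb1
      · rw [if_pos rfl]
        have h1 : Tendsto (fun n : ℕ =>
            (∑ k ∈ Finset.Icc 1 (n - 1), 1 / (k : ℝ) ^ 1) / Real.log n) atTop (nhds 1) := by
          simp only [pow_one]; exact harmonic_div_log
        have := (tendsto_const_nhds
          (x := (stirling2 i 1 : ℝ) * (Nat.factorial (1 - 1) : ℝ) * θ ^ 1)).mul h1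
        rw [mul_one] at this
        exact this
      · rw [if_neg hb1]
        have hb2 : 2 ≤ b := by
          rcases Finset.mem_Icc.mp hb with ⟨h1, _⟩; omega
        have := (tendsto_const_nhds
          (x := (stirling2 i b : ℝ) * (Nat.factorial (b - 1) : ℝ) * θ ^ b)).mul
          (sum_pow_div_log b hb2)
        rw [mul_zero] at this
        exact this
    convert hlim using 2
    rw [Finset.sum_ite_eq' (Finset.Icc 1 i) 1
      (fun b => (stirling2 i b : ℝ) * Nat.factorial (b - 1) * θ ^ b)]
    rw [if_pos (Finset.mem_Icc.mpr ⟨le_refl 1, by omega⟩)]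
    obtain ⟨j, rfl⟩ : ∃ j, i = j + 1 := ⟨i - 1, by omega⟩
    rw [stirling2_succ_one]
    simp [Nat.factorial]
  -- denominator asymptotics
  have hDen : Tendsto (fun n : ℕ =>
      (θ * (∑ k ∈ Finset.Icc 1 (n - 1), 1 / (k : ℝ))
        + θ ^ 2 * ∑ k ∈ Finset.Icc 1 (n - 1), 1 / (k : ℝ) ^ 2) / Real.log n) atTop (nhds θ) := by
    have key : ∀ n : ℕ,
        (θ * (∑ k ∈ Finset.Icc 1 (n - 1), 1 / (k : ℝ))
          + θ ^ 2 * ∑ k ∈ Finset.Icc 1 (n - 1), 1 / (k : ℝ) ^ 2) / Real.log n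
        = θ * ((∑ k ∈ Finset.Icc 1 (n - 1), 1 / (k : ℝ)) / Real.log n)
          + θ ^ 2 * ((∑ k ∈ Finset.Icc 1 (n - 1), 1 / (k : ℝ) ^ 2) / Real.log n) := by
      intro n; ring
    simp only [key]
    have := ((tendsto_const_nhds (x := θ)).mul harmonic_div_log).add
      ((tendsto_const_nhds (x := θ ^ 2)).mul (sum_pow_div_log 2 le_rfl))
    rw [mul_one, mul_zero, add_zero] at this
    exact this
  -- the main asymptotic product
  have hT : Tendsto (fun n : ℕ =>
      ((∑ b ∈ Finset.Icc 1 i, (stirling2 i b : ℝ) * Nat.factorial (b - 1) * θ ^ b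
        * ∑ k ∈ Finset.Icc 1 (n - 1), 1 / (k : ℝ) ^ b) / Real.log n)
      * ((θ * (∑ k ∈ Finset.Icc 1 (n - 1), 1 / (k : ℝ))
          + θ ^ 2 * ∑ k ∈ Finset.Icc 1 (n - 1), 1 / (k : ℝ) ^ 2) / Real.log n) ^ (-p)
      * θ ^ (p - 1)) atTop (nhds 1) := by
    have h2 : Tendsto (fun n : ℕ =>
        ((θ * (∑ k ∈ Finset.Icc 1 (n - 1), 1 / (k : ℝ))
          + θ ^ 2 * ∑ k ∈ Finset.Icc 1 (n - 1), 1 / (k : ℝ) ^ 2) / Real.log n) ^ (-p))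
        atTop (nhds (θ ^ (-p))) :=
      hDen.rpow_const (Or.inl hθ.ne')
    have h3 := (hNum.mul h2).mul (tendsto_const_nhds (x := θ ^ (p - 1)))
    have h4 : θ * θ ^ (-p) * θ ^ (p - 1) = 1 := by
      rw [show θ * θ ^ (-p) * θ ^ (p - 1)
          = θ ^ (1:ℝ) * θ ^ (-p) * θ ^ (p - 1) by rw [Real.rpow_one],
        ← Real.rpow_add hθ, ← Real.rpow_add hθ,
        show (1 : ℝ) + -p + (p - 1) = 0 by ring, Real.rpow_zero]
    rw [h4] at h3
    exact h3
  -- eventual equality between target quotient and the product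
  have heq : ∀ᶠ n : ℕ in atTop,
      ((∑ b ∈ Finset.Icc 1 i, (stirling2 i b : ℝ) * Nat.factorial (b - 1) * θ ^ b
          * ∑ k ∈ Finset.Icc 1 (n - 1), 1 / (k : ℝ) ^ b)
        / (θ * (∑ k ∈ Finset.Icc 1 (n - 1), 1 / (k : ℝ))
            + θ ^ 2 * ∑ k ∈ Finset.Icc 1 (n - 1), 1 / (k : ℝ) ^ 2) ^ ((i : ℝ) / 2))
        / (θ ^ (1 - (i : ℝ) / 2) / Real.log n ^ (((i : ℝ) - 2) / 2))
      = ((∑ b ∈ Finset.Icc 1 i, (stirling2 i b : ℝ) * Nat.factorial (b - 1) * θ ^ b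
          * ∑ k ∈ Finset.Icc 1 (n - 1), 1 / (k : ℝ) ^ b) / Real.log n)
        * ((θ * (∑ k ∈ Finset.Icc 1 (n - 1), 1 / (k : ℝ))
            + θ ^ 2 * ∑ k ∈ Finset.Icc 1 (n - 1), 1 / (k : ℝ) ^ 2) / Real.log n) ^ (-p)
        * θ ^ (p - 1) := by
    filter_upwards [eventually_ge_atTop 3] with n hn
    set N := ∑ b ∈ Finset.Icc 1 i, (stirling2 i b : ℝ) * Nat.factorial (b - 1) * θ ^ b
        * ∑ k ∈ Finset.Icc 1 (n - 1), 1 / (k : ℝ) ^ b with hNdef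
    set D := θ * (∑ k ∈ Finset.Icc 1 (n - 1), 1 / (k : ℝ))
        + θ ^ 2 * ∑ k ∈ Finset.Icc 1 (n - 1), 1 / (k : ℝ) ^ 2 with hDdef
    set L := Real.log n with hLdef
    have hLpos : 0 < L := Real.log_pos (by exact_mod_cast by omega)
    have hDpos : 0 < D := by
      rw [hDdef]
      have h1 : (0:ℝ) < ∑ k ∈ Finset.Icc 1 (n - 1), 1 / (k : ℝ) := by
        refine Finset.sum_pos (fun k hk => ?_) ⟨1, Finset.mem_Icc.mpr ⟨le_rfl, by omega⟩⟩
        have hk1 := (Finset.mem_Icc.mp hk).1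
        have : (0:ℝ) < (k:ℝ) := by exact_mod_cast hk1
        positivity
      have h2 : (0:ℝ) ≤ ∑ k ∈ Finset.Icc 1 (n - 1), 1 / (k : ℝ) ^ 2 :=
        Finset.sum_nonneg fun k _ => by positivity
      positivity
    -- rewrite exponents in terms of p
    rw [show (1 - (i : ℝ) / 2) = -(p - 1) by rw [hp]; ring,
      show (((i : ℝ) - 2) / 2) = p - 1 by rw [hp]; ring,
      show ((i : ℝ) / 2) = p from rfl]
    rw [Real.rpow_neg hθ.le,
      Real.rpow_neg (by positivity : (0:ℝ) ≤ D / L),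
      Real.div_rpow hDpos.le hLpos.le]
    have hLp : L ^ p = L * L ^ (p - 1) := by
      have h := Real.rpow_add hLpos 1 (p - 1)
      rw [Real.rpow_one, show (1:ℝ) + (p - 1) = p by ring] at h
      exact h
    rw [hLp]
    have h1 : (0:ℝ) < L ^ (p - 1) := Real.rpow_pos_of_pos hLpos _
    have h2 : (0:ℝ) < D ^ p := Real.rpow_pos_of_pos hDpos _
    have h3 : (0:ℝ) < θ ^ (p - 1) := Real.rpow_pos_of_pos hθ _
    field_simp
  have hsecond : Tendsto
      (fun n : ℕ =>
        ((∑ b ∈ Finset.Icc 1 i, (stirling2 i b : ℝ) * Nat.factorial (b - 1) * θ ^ b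
            * ∑ k ∈ Finset.Icc 1 (n - 1), 1 / (k : ℝ) ^ b)
          / (θ * (∑ k ∈ Finset.Icc 1 (n - 1), 1 / (k : ℝ))
              + θ ^ 2 * ∑ k ∈ Finset.Icc 1 (n - 1), 1 / (k : ℝ) ^ 2) ^ ((i : ℝ) / 2))
          / (θ ^ (1 - (i : ℝ) / 2) / Real.log n ^ (((i : ℝ) - 2) / 2)))
      atTop (nhds 1) := hT.congr' (EventuallyEq.symm heq)
  refine ⟨?_, hsecond⟩
  -- first part: the original quotient tends to 0
  have hg : Tendsto (fun n : ℕ =>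
      θ ^ (1 - (i : ℝ) / 2) / Real.log n ^ (((i : ℝ) - 2) / 2)) atTop (nhds 0) := by
    refine tendsto_const_nhds.div_atTop ?_
    have hq : (0:ℝ) < ((i : ℝ) - 2) / 2 := by
      have : (3 : ℝ) ≤ (i : ℝ) := by exact_mod_cast hi
      linarith
    exact (tendsto_rpow_atTop hq).comp hlog
  have hmul := hsecond.mul hg
  rw [one_mul] at hmul
  refine hmul.congr' ?_
  filter_upwards [eventually_ge_atTop 3] with n hn
  have hLpos : 0 < Real.log n := Real.log_pos (by exact_mod_cast by omega)
  have hgne : θ ^ (1 - (i : ℝ) / 2) / Real.log n ^ (((i : ℝ) - 2) / 2) ≠ 0 := by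
    have h1 : (0:ℝ) < θ ^ (1 - (i : ℝ) / 2) := Real.rpow_pos_of_pos hθ _
    have h2 : (0:ℝ) < Real.log n ^ (((i : ℝ) - 2) / 2) := Real.rpow_pos_of_pos hLpos _
    positivity
  exact div_mul_cancel₀ _ hgne
end

section
/- Let θ > 0 and fix a positive integer i. Then, as n → ∞, κ_i,n := (∑_{b=1}^{i} S(i, b) (b-1)! θ^b H_{n-1}^{(b)}) / (θ H_{n-1})^i, which is the i-th cumulant of S_n/(θ H_{n-1}), converges to 1 if i = 1 and to 0 if i ≥ 2. -/
open Filter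

private noncomputable def Hh (n : ℕ) : ℝ := ∑ k ∈ Finset.Icc 1 (n - 1), 1 / (k : ℝ)

private lemma Hh_tendsto : Tendsto Hh atTop atTop := by
  have h1 : Tendsto (fun m : ℕ => ∑ j ∈ Finset.range m, (1 / (j + 1) : ℝ)) atTop atTop :=
    Real.tendsto_sum_range_one_div_nat_succ_atTop
  have h2 : Tendsto (fun n : ℕ => n - 1) atTop atTop := tendsto_sub_atTop_nat 1
  refine (h1.comp h2).congr fun n => ?_
  simp only [Function.comp, Hh]
  rw [← Finset.Ico_add_one_right_eq_Icc, Finset.sum_Ico_eq_sum_range]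
  refine Finset.sum_congr rfl fun j _ => ?_
  push_cast
  ring_nf

private lemma Hh_nonneg (n : ℕ) : 0 ≤ Hh n := by
  unfold Hh; positivity

/-- For `θ > 0` and a fixed positive integer `i`, the `i`-th cumulant of `S_n/(θ H_{n-1})`,
namely `κ_{i,n} = (∑_{b=1}^i S(i,b)(b-1)! θ^b H_{n-1}^{(b)})/(θ H_{n-1})^i`, converges to
`1` if `i = 1` and to `0` if `i ≥ 2`, as `n → ∞`. -/
theorem rescaled_cumulant_limit (θ : ℝ) (hθ : 0 < θ) (i : ℕ) (hi : 1 ≤ i) :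
    Tendsto
      (fun n : ℕ =>
        (∑ b ∈ Finset.Icc 1 i, (stirling2 i b : ℝ) * Nat.factorial (b - 1) * θ ^ b
            * ∑ k ∈ Finset.Icc 1 (n - 1), 1 / (k : ℝ) ^ b)
          / (θ * ∑ k ∈ Finset.Icc 1 (n - 1), 1 / (k : ℝ)) ^ i)
      atTop (nhds (if i = 1 then 1 else 0)) := by
  have hH := Hh_tendsto
  have hHpos : ∀ᶠ n in atTop, 0 < Hh n := hH.eventually_gt_atTop 0
  rcases eq_or_lt_of_le hi with h1 | h2
  · -- i = 1
    rw [← h1]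
    simp only [if_pos rfl]
    refine Tendsto.congr' ?_ tendsto_const_nhds
    filter_upwards [hHpos] with n hn
    have hHn : Hh n ≠ 0 := ne_of_gt hn
    show (1 : ℝ) = _
    rw [Finset.Icc_self, Finset.sum_singleton]
    have : stirling2 1 1 = 1 := rfl
    rw [this]
    unfold Hh at hHn
    simp only [Nat.cast_one, Nat.factorial, pow_one]
    field_simp
    simp
  · -- i ≥ 2
    have hi2 : 2 ≤ i := h2
    rw [if_neg (by omega)]
    have hpowH : Tendsto (fun n => Hh n ^ (i - 1)) atTop atTop :=
      (tendsto_pow_atTop (by omega)).comp hH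
    have hg : Tendsto (fun n => 1 / Hh n ^ (i - 1)) atTop (nhds 0) := by
      simpa [one_div, Pi.inv_def] using hpowH.inv_tendsto_atTop
    have key : ∀ b ∈ Finset.Icc 1 i,
        Tendsto (fun n : ℕ =>
          (stirling2 i b : ℝ) * Nat.factorial (b - 1) * θ ^ b
            * (∑ k ∈ Finset.Icc 1 (n - 1), 1 / (k : ℝ) ^ b) / (θ * Hh n) ^ i)
          atTop (nhds 0) := by
      intro b hb
      obtain ⟨hb1, hbi⟩ := Finset.mem_Icc.mp hb
      set c : ℝ := (stirling2 i b : ℝ) * Nat.factorial (b - 1) * θ ^ b with hc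
      have hc0 : 0 ≤ c := by positivity
      have hglim : Tendsto (fun n => c / θ ^ i * (1 / Hh n ^ (i - 1))) atTop (nhds 0) := by
        simpa using hg.const_mul (c / θ ^ i)
      refine squeeze_zero' ?_ ?_ hglim
      · filter_upwards [hHpos] with n hn
        have hHn : (0:ℝ) < (θ * Hh n) ^ i := by positivity
        positivity
      · filter_upwards [hHpos] with n hn
        have hsum : (∑ k ∈ Finset.Icc 1 (n - 1), 1 / (k : ℝ) ^ b) ≤ Hh n := by
          unfold Hh
          refine Finset.sum_le_sum fun k hk => ?_
          have hk1 : 1 ≤ k := (Finset.mem_Icc.mp hk).1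
          have hk1' : (1:ℝ) ≤ (k:ℝ) := by exact_mod_cast hk1
          have : (k:ℝ) ≤ (k:ℝ) ^ b := le_self_pow₀ hk1' (by omega)
          apply one_div_le_one_div_of_le (by linarith) this
        have hpow : Hh n ^ i = Hh n ^ (i - 1) * Hh n := by
          rw [← pow_succ]; congr 1; omega
        calc c * (∑ k ∈ Finset.Icc 1 (n - 1), 1 / (k : ℝ) ^ b) / (θ * Hh n) ^ i
            ≤ c * Hh n / (θ * Hh n) ^ i := by
              gcongr
          _ = c / θ ^ i * (1 / Hh n ^ (i - 1)) := by
              rw [mul_pow, hpow]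
              field_simp
    have := tendsto_finset_sum (Finset.Icc 1 i) key
    rw [Finset.sum_const, smul_zero] at this
    refine this.congr fun n => ?_
    rw [← Finset.sum_div]
    rfl
end
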